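/- arXiv:2008.07416 — 12 statements merged into one kernel-verified Lean document; each statement's English description precedes it below -/
import Mathlib

section
/- Let V be a real vector space of finite dimension n > 1, let m be a nondegenerate symmetric bilinear form on V, and let p be a symmetric bilinear form on V. Then the following are equivalent: (1) p(v,v) > 0 for every v ∈ V \ {0} with m(v,v) = 0; (2) there exists λ ∈ ℝ such that p(v,v) − λ·m(v,v) > 0 for every v ∈ V \ {0}. -/
section AuxLemmas

/-- Plane lemma: purely algebraic. -/
private lemma plane_lemma {V : Type*} [AddCommGroup V] [Module ℝ V]
    (m q : V →ₗ[ℝ] V →ₗ[ℝ] ℝ)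
    (hm : ∀ x y : V, m x y = m y x) (hq : ∀ x y : V, q x y = q y x)
    (hnull : ∀ u : V, u ≠ 0 → m u u = 0 → 0 < q u u)
    (v w : V) (hv : m v v < 0) (hw : 0 < m w w)
    (hqv : q v v ≤ 0) (hqw : q w w ≤ 0) : False := by
  set a := m v v with ha'
  set b := m w w with hb'
  set c := m v w with hc'
  have ha : a ≠ 0 := ne_of_lt hv
  have hDpos : 0 < c ^ 2 - a * b := by nlinarith [sq_nonneg c]
  set r := Real.sqrt (c ^ 2 - a * b) with hr'
  have hr : r ^ 2 = c ^ 2 - a * b := Real.sq_sqrt hDpos.le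
  have hmexp : ∀ s : ℝ, m (s • v + w) (s • v + w) = s ^ 2 * a + 2 * s * c + b := by
    intro s
    have h := hm w v
    simp only [map_add, map_smul, LinearMap.add_apply, LinearMap.smul_apply, smul_eq_mul]
    rw [← ha', ← hb', ← hc', h, ← hc']; ring
  set d := q v w with hd'
  have hqexp : ∀ s : ℝ, q (s • v + w) (s • v + w)
      = s ^ 2 * q v v + 2 * s * d + q w w := by
    intro s
    have h := hq w v
    simp only [map_add, map_smul, LinearMap.add_apply, LinearMap.smul_apply, smul_eq_mul]
    rw [h, ← hd']; ring
  have key : ∀ s : ℝ, s ^ 2 * a + 2 * s * c + b = 0 → 0 < s * d := by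
    intro s hs
    have hne : s • v + w ≠ 0 := by
      intro h0
      have hw' : w = -(s • v) := eq_neg_of_add_eq_zero_right h0
      have hmw : m w w = s ^ 2 * a := by
        rw [hw']; simp only [map_neg, map_smul, LinearMap.neg_apply, LinearMap.smul_apply,
          smul_eq_mul, neg_neg, ← ha']; ring
      rw [← hb'] at hmw
      nlinarith [sq_nonneg s]
    have hpos := hnull _ hne (by rw [hmexp s, hs])
    rw [hqexp s] at hpos
    nlinarith [mul_nonneg (sq_nonneg s) (neg_nonneg.mpr hqv)]
  set s₁ := (-c + r) / a with hs₁'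
  set s₂ := (-c - r) / a with hs₂'
  have hsa₁ : s₁ * a = -c + r := div_mul_cancel₀ _ ha
  have hsa₂ : s₂ * a = -c - r := div_mul_cancel₀ _ ha
  have e₁ : s₁ * (c + r) = -b := by
    have : (s₁ * (c + r)) * a = (-b) * a := by
      calc (s₁ * (c + r)) * a = (s₁ * a) * (c + r) := by ring
        _ = (-c + r) * (c + r) := by rw [hsa₁]
        _ = r ^ 2 - c ^ 2 := by ring
        _ = (-b) * a := by rw [hr]; ring
    exact mul_right_cancel₀ ha this
  have e₂ : s₂ * (c - r) = -b := by
    have : (s₂ * (c - r)) * a = (-b) * a := by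
      calc (s₂ * (c - r)) * a = (s₂ * a) * (c - r) := by ring
        _ = (-c - r) * (c - r) := by rw [hsa₂]
        _ = r ^ 2 - c ^ 2 := by ring
        _ = (-b) * a := by rw [hr]; ring
    exact mul_right_cancel₀ ha this
  have h₁ : 0 < s₁ * d := key s₁ (by linear_combination s₁ * hsa₁ + e₁)
  have h₂ : 0 < s₂ * d := key s₂ (by linear_combination s₂ * hsa₂ + e₂)
  have hss : s₁ * s₂ * a = b := by
    have : (s₁ * s₂ * a) * a = b * a := by
      calc (s₁ * s₂ * a) * a = (s₁ * a) * (s₂ * a) := by ring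
        _ = (-c + r) * (-c - r) := by rw [hsa₁, hsa₂]
        _ = c ^ 2 - r ^ 2 := by ring
        _ = b * a := by rw [hr]; ring
    exact mul_right_cancel₀ ha this
  have hneg : s₁ * s₂ < 0 := by nlinarith
  nlinarith [mul_pos h₁ h₂, mul_nonpos_of_nonpos_of_nonneg hneg.le (sq_nonneg d)]

/-- Continuity of a quadratic form in finite dimension. -/
private lemma cont_quad {W : Type*} [NormedAddCommGroup W] [NormedSpace ℝ W]
    [FiniteDimensional ℝ W]
    (b : W →ₗ[ℝ] W →ₗ[ℝ] ℝ) : Continuous fun x => b x x := by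
  let B : W →ₗ[ℝ] (W →L[ℝ] ℝ) :=
    (LinearMap.toContinuousLinearMap :
      (W →ₗ[ℝ] ℝ) ≃ₗ[ℝ] (W →L[ℝ] ℝ)).toLinearMap.comp b
  have hB : Continuous B := B.continuous_of_finiteDimensional
  have hcont : Continuous fun x : W => (B x) x :=
    isBoundedBilinearMap_apply.continuous.comp (hB.prodMk continuous_id)
  have heq : (fun x => b x x) = fun x : W => (B x) x := by
    funext x; simp [B]
  rw [heq]; exact hcont

/-- One-sided lemma: an `l` working on the part of the sphere where `M ≤ 0`. -/
private lemma side_lemma {W : Type*} [NormedAddCommGroup W] [NormedSpace ℝ W]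
    [FiniteDimensional ℝ W]
    (Q M : W → ℝ) (hQ : Continuous Q) (hM : Continuous M)
    (hnull : ∀ v : W, ‖v‖ = 1 → M v = 0 → 0 < Q v) :
    ∃ l : ℝ, ∀ v : W, ‖v‖ = 1 → M v ≤ 0 → 0 < Q v - l * M v := by
  set A : Set W := {v | ‖v‖ = 1 ∧ M v ≤ 0} with hA'
  have hAcomp : IsCompact A := by
    have : A = Metric.sphere 0 1 ∩ M ⁻¹' Set.Iic 0 := by
      ext v; simp [hA', mem_sphere_zero_iff_norm]
    rw [this]
    exact (isCompact_sphere 0 1).inter_right (isClosed_Iic.preimage hM)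
  set K : Set W := A ∩ Q ⁻¹' Set.Iic 0 with hK'
  have hKcomp : IsCompact K := hAcomp.inter_right (isClosed_Iic.preimage hQ)
  rcases K.eq_empty_or_nonempty with hK | hK
  · refine ⟨0, fun v hv hMv => ?_⟩
    have hQv : 0 < Q v := by
      by_contra h
      push_neg at h
      have : v ∈ K := ⟨⟨hv, hMv⟩, h⟩
      simp [hK] at this
    simpa using hQv
  · obtain ⟨v₀, hv₀K, hv₀max⟩ := hKcomp.exists_isMaxOn hK hM.continuousOn
    have hMv₀ : M v₀ < 0 := by
      rcases lt_or_eq_of_le hv₀K.1.2 with h | h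
      · exact h
      · exfalso
        have := hnull v₀ hv₀K.1.1 h
        have h2 : Q v₀ ≤ 0 := hv₀K.2
        linarith
    obtain ⟨w₀, hw₀A, hw₀min⟩ := hAcomp.exists_isMinOn ⟨v₀, hv₀K.1⟩ hQ.continuousOn
    have hC : Q w₀ ≤ 0 := le_trans (hw₀min hv₀K.1) hv₀K.2
    set δ := -M v₀ with hδ'
    have hδ : 0 < δ := by simp [hδ']; linarith
    set l := (1 - Q w₀) / δ with hl'
    have hlpos : 0 < l := div_pos (by linarith) hδ
    have hlδ : l * δ = 1 - Q w₀ := div_mul_cancel₀ _ hδ.ne'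
    refine ⟨l, fun v hv hMv => ?_⟩
    rcases le_or_gt (Q v) 0 with hQv | hQv
    · have hvK : v ∈ K := ⟨⟨hv, hMv⟩, hQv⟩
      have h1 : M v ≤ M v₀ := hv₀max hvK
      have h2 : Q w₀ ≤ Q v := hw₀min hvK.1
      nlinarith
    · nlinarith [mul_nonneg hlpos.le (neg_nonneg.mpr hMv)]

/-- Openness of the set of good `l`'s over a compact set. -/
private lemma open_lemma {W : Type*} [NormedAddCommGroup W] (K : Set W) (hK : IsCompact K)
    (Q M : W → ℝ) (hQ : Continuous Q) (hM : Continuous M) :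
    IsOpen {l : ℝ | ∀ v ∈ K, 0 < Q v - l * M v} := by
  rw [Metric.isOpen_iff]
  intro l hl
  rcases K.eq_empty_or_nonempty with h | h
  · exact ⟨1, one_pos, fun l' _ v hv => absurd hv (by simp [h])⟩
  · obtain ⟨v₁, hv₁, hmin⟩ := hK.exists_isMinOn h
      ((hQ.sub (continuous_const.mul hM)).continuousOn)
    have hε₁ : 0 < Q v₁ - l * M v₁ := hl v₁ hv₁
    obtain ⟨v₂, hv₂, hmax⟩ := hK.exists_isMaxOn h hM.norm.continuousOn
    set C := ‖M v₂‖ with hC'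
    have hC : 0 ≤ C := norm_nonneg _
    set ε₁ := Q v₁ - l * M v₁ with hε₁'
    refine ⟨ε₁ / (C + 1), by positivity, fun l' hl' => ?_⟩
    intro v hv
    have h1 : ε₁ ≤ Q v - l * M v := hmin hv
    have h2 : |M v| ≤ C := hmax hv
    have h3 : |l' - l| < ε₁ / (C + 1) := by
      rw [Metric.mem_ball, Real.dist_eq] at hl'; exact hl'
    have h3' : |l' - l| * (C + 1) < ε₁ := by
      rw [lt_div_iff₀ (by positivity)] at h3; exact h3
    have h4 : |(l' - l) * M v| ≤ |l' - l| * C := by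
      rw [abs_mul]
      exact mul_le_mul_of_nonneg_left h2 (abs_nonneg _)
    have h5 : (l' - l) * M v ≤ |(l' - l) * M v| := le_abs_self _
    nlinarith [abs_nonneg (l' - l)]

end AuxLemmas

/-- Proposition (pointwise pseudoconvexity): for a nondegenerate symmetric bilinear
form `m` and a symmetric bilinear form `p` on a real vector space of dimension `> 1`,
positivity of `p` on the nonzero `m`-null vectors is equivalent to the existence of
`l ∈ ℝ` with `p - l·m` positive definite. -/
theorem pointwise_pseudoconvexity
    {V : Type*} [AddCommGroup V] [Module ℝ V] [FiniteDimensional ℝ V]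
    (hdim : 1 < Module.finrank ℝ V)
    (m p : V →ₗ[ℝ] V →ₗ[ℝ] ℝ)
    (hm_symm : ∀ v w : V, m v w = m w v)
    (hm_nondeg : ∀ v : V, (∀ w : V, m v w = 0) → v = 0)
    (hp_symm : ∀ v w : V, p v w = p w v) :
    (∀ v : V, v ≠ 0 → m v v = 0 → 0 < p v v) ↔
      ∃ l : ℝ, ∀ v : V, v ≠ 0 → 0 < p v v - l * m v v := by
  constructor
  · intro h
    classical
    set n := Module.finrank ℝ V with hn
    let e : V ≃ₗ[ℝ] (Fin n → ℝ) := (Module.finBasis ℝ V).equivFun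
    set Q : (Fin n → ℝ) → ℝ := fun x => p (e.symm x) (e.symm x) with hQ'
    set M : (Fin n → ℝ) → ℝ := fun x => m (e.symm x) (e.symm x) with hM'
    have hQcont : Continuous Q := by
      have := cont_quad (p.compl₁₂ (e.symm : (Fin n → ℝ) →ₗ[ℝ] V)
        (e.symm : (Fin n → ℝ) →ₗ[ℝ] V))
      simpa [LinearMap.compl₁₂_apply, hQ'] using this
    have hMcont : Continuous M := by
      have := cont_quad (m.compl₁₂ (e.symm : (Fin n → ℝ) →ₗ[ℝ] V)
        (e.symm : (Fin n → ℝ) →ₗ[ℝ] V))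
      simpa [LinearMap.compl₁₂_apply, hM'] using this
    have hsymmne : ∀ x : Fin n → ℝ, x ≠ 0 → e.symm x ≠ 0 := by
      intro x hx h0
      exact hx ((LinearEquiv.map_eq_zero_iff e.symm).mp h0)
    have hnull : ∀ x : Fin n → ℝ, ‖x‖ = 1 → M x = 0 → 0 < Q x := by
      intro x hx hMx
      exact h _ (hsymmne x (by intro h0; rw [h0] at hx; simp at hx)) hMx
    obtain ⟨l₀, hl₀⟩ := side_lemma Q M hQcont hMcont hnull
    obtain ⟨l₁, hl₁⟩ := side_lemma Q (fun x => -M x) hQcont hMcont.neg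
      (fun v hv hmv => hnull v hv (neg_eq_zero.mp hmv))
    set A : Set (Fin n → ℝ) := {v | ‖v‖ = 1 ∧ M v ≤ 0} with hA'
    set B : Set (Fin n → ℝ) := {v | ‖v‖ = 1 ∧ 0 ≤ M v} with hB'
    have hAcomp : IsCompact A := by
      have : A = Metric.sphere 0 1 ∩ M ⁻¹' Set.Iic 0 := by
        ext v; simp [hA', mem_sphere_zero_iff_norm]
      rw [this]
      exact (isCompact_sphere 0 1).inter_right (isClosed_Iic.preimage hMcont)
    have hBcomp : IsCompact B := by
      have : B = Metric.sphere 0 1 ∩ M ⁻¹' Set.Ici 0 := by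
        ext v; simp [hB', mem_sphere_zero_iff_norm]
      rw [this]
      exact (isCompact_sphere 0 1).inter_right (isClosed_Ici.preimage hMcont)
    have hAopen := open_lemma A hAcomp Q M hQcont hMcont
    have hBopen := open_lemma B hBcomp Q M hQcont hMcont
    have hmemA : l₀ ∈ {l : ℝ | ∀ v ∈ A, 0 < Q v - l * M v} :=
      fun v hv => hl₀ v hv.1 hv.2
    have hmemB : (-l₁) ∈ {l : ℝ | ∀ v ∈ B, 0 < Q v - l * M v} := by
      intro v hv
      have := hl₁ v hv.1 (by simpa using hv.2)
      linarith [this]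
    have hcover : (Set.univ : Set ℝ) ⊆ {l : ℝ | ∀ v ∈ A, 0 < Q v - l * M v}
        ∪ {l : ℝ | ∀ v ∈ B, 0 < Q v - l * M v} := by
      intro l _
      by_contra hc
      rw [Set.mem_union, not_or] at hc
      obtain ⟨h1, h2⟩ := hc
      simp only [Set.mem_setOf_eq] at h1 h2
      push_neg at h1 h2
      obtain ⟨v, hvA, hv2⟩ := h1
      obtain ⟨w, hwB, hw2⟩ := h2
      have hMv : M v < 0 := by
        rcases lt_or_eq_of_le hvA.2 with h' | h'
        · exact h'
        · exfalso
          have := hnull v hvA.1 h'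
          rw [h'] at hv2
          linarith
      have hMw : 0 < M w := by
        rcases lt_or_eq_of_le hwB.2 with h' | h'
        · exact h'
        · exfalso
          have := hnull w hwB.1 h'.symm
          rw [← h', mul_zero, sub_zero] at hw2
          linarith
      set q : V →ₗ[ℝ] V →ₗ[ℝ] ℝ := p - l • m with hq'
      have hqapp : ∀ x y : V, q x y = p x y - l * m x y := by
        intro x y
        simp [hq', LinearMap.sub_apply, LinearMap.smul_apply, smul_eq_mul]
      exact plane_lemma m q hm_symm
        (fun x y => by rw [hqapp, hqapp, hm_symm, hp_symm])
        (fun u hu hmu => by rw [hqapp, hmu, mul_zero, sub_zero]; exact h u hu hmu)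
        (e.symm v) (e.symm w) hMv hMw
        (by rw [hqapp]; exact hv2) (by rw [hqapp]; exact hw2)
    obtain ⟨l, -, hlA, hlB⟩ := isPreconnected_univ _ _ hAopen hBopen hcover
      ⟨l₀, Set.mem_univ _, hmemA⟩ ⟨-l₁, Set.mem_univ _, hmemB⟩
    refine ⟨l, fun v hv => ?_⟩
    set x := e v with hx'
    have hxne : x ≠ 0 := by
      simp only [hx']
      intro h0
      exact hv ((LinearEquiv.map_eq_zero_iff e).mp h0)
    set c := ‖x‖ with hc'
    have hc : 0 < c := norm_pos_iff.mpr hxne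
    have hcne : c ≠ 0 := hc.ne'
    set u := c⁻¹ • x with hu'
    have hu : ‖u‖ = 1 := by
      rw [hu', norm_smul, norm_inv, norm_norm, ← hc', inv_mul_cancel₀ hcne]
    have key : 0 < Q u - l * M u := by
      rcases le_total (M u) 0 with h' | h'
      · exact hlA u ⟨hu, h'⟩
      · exact hlB u ⟨hu, h'⟩
    have hesymm : e.symm u = c⁻¹ • v := by
      rw [hu', map_smul, hx', e.symm_apply_apply]
    have hQu : Q u = c⁻¹ * (c⁻¹ * p v v) := by
      rw [hQ']
      simp only [hesymm, map_smul, LinearMap.smul_apply, smul_eq_mul]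
    have hMu : M u = c⁻¹ * (c⁻¹ * m v v) := by
      rw [hM']
      simp only [hesymm, map_smul, LinearMap.smul_apply, smul_eq_mul]
    rw [hQu, hMu] at key
    have hfin := mul_pos (mul_pos hc hc) key
    calc (0:ℝ) < c * c * (c⁻¹ * (c⁻¹ * p v v) - l * (c⁻¹ * (c⁻¹ * m v v))) := hfin
      _ = p v v - l * m v v := by field_simp
  · rintro ⟨l, hl⟩ v hv hmv
    have := hl v hv
    rw [hmv, mul_zero, sub_zero] at this
    exact this
end

section
/- Let V be a real vector space of finite dimension n > 1, let m be a nondegenerate symmetric bilinear form on V, let p be a symmetric bilinear form on V, let n₀ be a positive-definite symmetric bilinear form (inner product) on V, and let c > 0. Then the following are equivalent: (1) p(v,v) > c·n₀(v,v) for every v ∈ V \ {0} with m(v,v) = 0; (2) there exists λ ∈ ℝ such that p(v,v) − λ·m(v,v) > c·n₀(v,v) for every v ∈ V \ {0}. -/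
section Aux

set_option linter.unusedSectionVars false

variable {V : Type*} [NormedAddCommGroup V] [NormedSpace ℝ V] [FiniteDimensional ℝ V]

lemma quad_core (ma mb mc ra rb rc : ℝ) (hma : 0 < ma) (hmc : mc < 0) (hra : ra ≤ 0) (hrc : rc ≤ 0)
    (hnull : ∀ t : ℝ, ma + 2*mb*t + mc*t^2 = 0 → 0 < ra + 2*rb*t + rc*t^2) : False := by
  have hmc0 : mc ≠ 0 := hmc.ne
  have hD : 0 < mb^2 - mc*ma := by nlinarith [sq_nonneg mb]
  set s := Real.sqrt (mb^2 - mc*ma) with hs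
  have hs2 : s^2 = mb^2 - mc*ma := Real.sq_sqrt hD.le
  have hsb : |mb| < s := by
    nlinarith [sq_abs mb, Real.sqrt_nonneg (mb^2 - mc*ma), sq_nonneg (s - |mb|)]
  have h1 : mb < s := lt_of_le_of_lt (le_abs_self mb) hsb
  have h2 : -s < mb := by linarith [neg_abs_le mb]
  have ht1 : (-mb + s)/mc < 0 := div_neg_of_pos_of_neg (by linarith) hmc
  have ht2 : 0 < (-mb - s)/mc := div_pos_of_neg_of_neg (by linarith) hmc
  have hroot : ∀ t : ℝ, (t = (-mb + s)/mc ∨ t = (-mb - s)/mc) → ma + 2*mb*t + mc*t^2 = 0 := by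
    rintro t (rfl | rfl) <;> (field_simp; linear_combination hs2)
  have g1 := hnull _ (hroot _ (Or.inl rfl))
  have g2 := hnull _ (hroot _ (Or.inr rfl))
  set t1 := (-mb + s)/mc
  set t2 := (-mb - s)/mc
  nlinarith [mul_pos ht2 g1, mul_pos (neg_pos.mpr ht1) g2,
    mul_nonneg (mul_nonneg (neg_nonneg.mpr hrc) (neg_nonneg.mpr ht1.le)) ht2.le,
    mul_pos (neg_pos.mpr ht1) ht2]

lemma expand_quad (m : V →ₗ[ℝ] V →ₗ[ℝ] ℝ) (hm : ∀ v w : V, m v w = m w v) (v w : V) (t : ℝ) :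
    m (v + t • w) (v + t • w) = m v v + 2 * (m v w) * t + (m w w) * t^2 := by
  simp [map_add, map_smul, LinearMap.add_apply, LinearMap.smul_apply, smul_eq_mul, hm w v]
  ring

/-- Lemma L: no simultaneous nonpositivity witnesses of both m-signs. -/
lemma lemL (m r : V →ₗ[ℝ] V →ₗ[ℝ] ℝ) (hm : ∀ v w : V, m v w = m w v)
    (hr : ∀ v w : V, r v w = r w v)
    (hnull : ∀ v : V, v ≠ 0 → m v v = 0 → 0 < r v v)
    (v w : V) (hv : 0 < m v v) (hw : m w w < 0)
    (hrv : r v v ≤ 0) (hrw : r w w ≤ 0) : False := by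
  refine quad_core (m v v) (m v w) (m w w) (r v v) (r v w) (r w w) hv hw hrv hrw ?_
  intro t ht
  have hne : v + t • w ≠ 0 := by
    intro h0
    have hveq : v = -(t • w) := by
      have := h0; rwa [add_eq_zero_iff_eq_neg] at this
    have : m v v = t^2 * m w w := by
      rw [hveq]; simp [map_neg, map_smul, LinearMap.neg_apply, LinearMap.smul_apply, smul_eq_mul]
      ring
    nlinarith [sq_nonneg t]
  have h := hnull _ hne (by rw [expand_quad m hm]; linarith)
  rw [expand_quad r hr] at h
  linarith

/-- the "negative-side bad set" predicate -/
def Npred (m r : V →ₗ[ℝ] V →ₗ[ℝ] ℝ) (l : ℝ) : Prop :=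
  ∃ v : V, ‖v‖ = 1 ∧ m v v < 0 ∧ r v v ≤ l * m v v

lemma closedN (m r : V →ₗ[ℝ] V →ₗ[ℝ] ℝ)
    (hnull : ∀ v : V, v ≠ 0 → m v v = 0 → 0 < r v v) :
    IsClosed {l : ℝ | Npred m r l} := by
  have hmc : Continuous fun v : V => m v v := by
    have h : Continuous ((LinearMap.toContinuousLinearMap :
        (V →ₗ[ℝ] ℝ) ≃ₗ[ℝ] (V →L[ℝ] ℝ)).toLinearMap ∘ₗ m) :=
      LinearMap.continuous_of_finiteDimensional _
    exact h.clm_apply continuous_id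
  have hrc : Continuous fun v : V => r v v := by
    have h : Continuous ((LinearMap.toContinuousLinearMap :
        (V →ₗ[ℝ] ℝ) ≃ₗ[ℝ] (V →L[ℝ] ℝ)).toLinearMap ∘ₗ r) :=
      LinearMap.continuous_of_finiteDimensional _
    exact h.clm_apply continuous_id
  rw [← isSeqClosed_iff_isClosed]
  intro ls l hmem hlim
  choose w hw1 hw2 hw3 using hmem
  have hsph : ∀ n, w n ∈ Metric.sphere (0 : V) 1 := by
    intro n; simpa [mem_sphere_zero_iff_norm] using hw1 n
  obtain ⟨a, ha, φ, hφ, hconv⟩ := (isCompact_sphere (0 : V) 1).tendsto_subseq hsph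
  have ha1 : ‖a‖ = 1 := by simpa [mem_sphere_zero_iff_norm] using ha
  have ha0 : a ≠ 0 := by intro h; rw [h] at ha1; simp at ha1
  have hmt : Filter.Tendsto (fun k => m (w (φ k)) (w (φ k))) Filter.atTop (nhds (m a a)) :=
    (hmc.tendsto a).comp hconv
  have hrt : Filter.Tendsto (fun k => r (w (φ k)) (w (φ k))) Filter.atTop (nhds (r a a)) :=
    (hrc.tendsto a).comp hconv
  have hlt : Filter.Tendsto (fun k => ls (φ k)) Filter.atTop (nhds l) :=
    hlim.comp hφ.tendsto_atTop
  have hma : m a a ≤ 0 := le_of_tendsto hmt (Filter.Eventually.of_forall fun k => (hw2 _).le)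
  have hra : r a a ≤ l * m a a :=
    le_of_tendsto_of_tendsto' hrt (hlt.mul hmt) fun k => hw3 _
  rcases eq_or_lt_of_le hma with heq | hlt0
  · exfalso
    have := hnull a ha0 heq
    rw [heq] at hra
    simp at hra
    linarith
  · exact ⟨a, ha1, hlt0, hra⟩

lemma notallN (m r : V →ₗ[ℝ] V →ₗ[ℝ] ℝ)
    (hnull : ∀ v : V, v ≠ 0 → m v v = 0 → 0 < r v v)
    (h : ∀ n : ℕ, Npred m r n) : False := by
  have hmc : Continuous fun v : V => m v v := by
    have h : Continuous ((LinearMap.toContinuousLinearMap :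
        (V →ₗ[ℝ] ℝ) ≃ₗ[ℝ] (V →L[ℝ] ℝ)).toLinearMap ∘ₗ m) :=
      LinearMap.continuous_of_finiteDimensional _
    exact h.clm_apply continuous_id
  have hrc : Continuous fun v : V => r v v := by
    have h : Continuous ((LinearMap.toContinuousLinearMap :
        (V →ₗ[ℝ] ℝ) ≃ₗ[ℝ] (V →L[ℝ] ℝ)).toLinearMap ∘ₗ r) :=
      LinearMap.continuous_of_finiteDimensional _
    exact h.clm_apply continuous_id
  choose w hw1 hw2 hw3 using h
  have hsph : ∀ n, w n ∈ Metric.sphere (0 : V) 1 := by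
    intro n; simpa [mem_sphere_zero_iff_norm] using hw1 n
  -- bound |r| on sphere
  obtain ⟨z, hz, hzmax⟩ := (isCompact_sphere (0 : V) 1).exists_isMaxOn ⟨w 0, hsph 0⟩
    (hrc.abs.continuousOn)
  set M := |r z z| with hM
  obtain ⟨a, ha, φ, hφ, hconv⟩ := (isCompact_sphere (0 : V) 1).tendsto_subseq hsph
  have ha1 : ‖a‖ = 1 := by simpa [mem_sphere_zero_iff_norm] using ha
  have ha0 : a ≠ 0 := by intro h; rw [h] at ha1; simp at ha1
  have hmt : Filter.Tendsto (fun k => m (w (φ k)) (w (φ k))) Filter.atTop (nhds (m a a)) :=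
    (hmc.tendsto a).comp hconv
  have hrt : Filter.Tendsto (fun k => r (w (φ k)) (w (φ k))) Filter.atTop (nhds (r a a)) :=
    (hrc.tendsto a).comp hconv
  -- r (w n) (w n) ≤ n * (m (w n) (w n)) ≤ 0
  have hr0 : r a a ≤ 0 := by
    refine le_of_tendsto hrt (Filter.Eventually.of_forall fun k => ?_)
    calc r (w (φ k)) (w (φ k)) ≤ (φ k : ℝ) * m (w (φ k)) (w (φ k)) := hw3 _
    _ ≤ 0 := mul_nonpos_of_nonneg_of_nonpos (Nat.cast_nonneg _) (hw2 _).le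
  -- m (w n) (w n) ≥ -M / n for n ≥ 1
  have hm0 : m a a = 0 := by
    refine le_antisymm (le_of_tendsto hmt (Filter.Eventually.of_forall fun k => (hw2 _).le)) ?_
    have hlow : Filter.Tendsto (fun k => -M / (φ k : ℝ)) Filter.atTop (nhds 0) := by
      apply Filter.Tendsto.div_atTop tendsto_const_nhds
      exact Filter.Tendsto.comp (tendsto_natCast_atTop_atTop) hφ.tendsto_atTop
    refine le_of_tendsto_of_tendsto hlow hmt ?_
    filter_upwards [Filter.eventually_ge_atTop 1] with k hk
    have hφk : (1:ℝ) ≤ (φ k : ℝ) := by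
      exact_mod_cast le_trans hk (hφ.le_apply)
    have hφpos : (0:ℝ) < (φ k : ℝ) := by linarith
    have hrb : -M ≤ r (w (φ k)) (w (φ k)) := by
      have := hzmax (hsph (φ k))
      have habs : |r (w (φ k)) (w (φ k))| ≤ M := this
      linarith [neg_abs_le (r (w (φ k)) (w (φ k)))]
    have : -M ≤ (φ k : ℝ) * m (w (φ k)) (w (φ k)) := le_trans hrb (hw3 _)
    rw [div_le_iff₀ hφpos] at *
    · nlinarith
  have := hnull a ha0 hm0
  linarith

theorem aux_main (m r : V →ₗ[ℝ] V →ₗ[ℝ] ℝ) (hm : ∀ v w : V, m v w = m w v)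
    (hr : ∀ v w : V, r v w = r w v)
    (hnull : ∀ v : V, v ≠ 0 → m v v = 0 → 0 < r v v) :
    ∃ l : ℝ, ∀ v : V, v ≠ 0 → 0 < r v v - l * m v v := by
  have hmneg : ∀ v w : V, (-m) v w = -(m v w) := by intro v w; simp
  have hm' : ∀ v w : V, (-m) v w = (-m) w v := by intro v w; simp [hm v w]
  have hnull' : ∀ v : V, v ≠ 0 → (-m) v v = 0 → 0 < r v v := by
    intro v hv h0; exact hnull v hv (by simpa using h0)
  -- disjointness via lemL
  have hdisj : ∀ l : ℝ, Npred m r l → Npred (-m) r (-l) → False := by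
    rintro l ⟨w, hw1, hw2, hw3⟩ ⟨v, hv1, hv2, hv3⟩
    have hv0 : v ≠ 0 := fun h => by rw [h] at hv1; simp at hv1
    have hw0 : w ≠ 0 := fun h => by rw [h] at hw1; simp at hw1
    set r' : V →ₗ[ℝ] V →ₗ[ℝ] ℝ := r - l • m with hr'
    have hr'app : ∀ x y : V, r' x y = r x y - l * m x y := by intro x y; simp [hr']
    have hr'symm : ∀ x y : V, r' x y = r' y x := by
      intro x y; rw [hr'app, hr'app, hm x y, hr x y]
    have hr'null : ∀ x : V, x ≠ 0 → m x x = 0 → 0 < r' x x := by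
      intro x hx h0; rw [hr'app, h0]; simpa using hnull x hx h0
    have hmv : 0 < m v v := by have := hv2; rw [hmneg] at this; linarith
    refine lemL m r' hm hr'symm hr'null v w hmv hw2 ?_ ?_
    · rw [hr'app]; rw [hmneg] at hv3; nlinarith
    · rw [hr'app]; linarith [hw3]
  set CN := {l : ℝ | Npred m r l} with hCN
  set CP := {l : ℝ | Npred (-m) r (-l)} with hCP
  have hCNcl : IsClosed CN := closedN m r hnull
  have hCPcl : IsClosed CP := by
    have : CP = (fun l : ℝ => -l) ⁻¹' {l : ℝ | Npred (-m) r l} := rfl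
    rw [this]
    exact (closedN (-m) r hnull').preimage continuous_neg
  by_contra hcon
  push_neg at hcon
  -- cover: every l is in CN ∪ CP
  have hcover : ∀ l : ℝ, l ∈ CN ∪ CP := by
    intro l
    obtain ⟨v, hv0, hle⟩ := hcon l
    have hle' : r v v ≤ l * m v v := by linarith
    have hnv : ‖v‖ ≠ 0 := norm_ne_zero_iff.mpr hv0
    set u := ‖v‖⁻¹ • v with hu
    have hu1 : ‖u‖ = 1 := norm_smul_inv_norm hv0
    set k := ‖v‖⁻¹ * ‖v‖⁻¹ with hk
    have hkpos : 0 < k := by positivity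
    have hmu : m u u = k * m v v := by
      simp [hu, map_smul, LinearMap.smul_apply, smul_eq_mul, hk]; ring
    have hru : r u u = k * r v v := by
      simp [hu, map_smul, LinearMap.smul_apply, smul_eq_mul, hk]; ring
    rcases lt_trichotomy (m v v) 0 with hlt | heq | hgt
    · left
      exact ⟨u, hu1, by rw [hmu]; exact mul_neg_of_pos_of_neg hkpos hlt,
        by rw [hmu, hru]; nlinarith⟩
    · exfalso
      have := hnull v hv0 heq
      rw [heq] at hle'; simp at hle'; linarith
    · right
      refine ⟨u, hu1, ?_, ?_⟩
      · rw [hmneg, hmu]; simp; positivity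
      · rw [hmneg, hmu, hru]; nlinarith
  -- CN nonempty
  have hCNne : CN.Nonempty := by
    by_contra hne
    rw [Set.not_nonempty_iff_eq_empty] at hne
    refine notallN (-m) r hnull' fun n => ?_
    have := hcover (-(n : ℝ))
    rcases this with h | h
    · exfalso; rw [hne] at h; exact h
    · have h' : Npred (-m) r (-(-(n : ℝ))) := h
      simpa using h'
  have hCPne : CP.Nonempty := by
    by_contra hne
    rw [Set.not_nonempty_iff_eq_empty] at hne
    refine notallN m r hnull fun n => ?_
    have := hcover (n : ℝ)
    rcases this with h | h
    · exact h
    · exfalso; rw [hne] at h; exact h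
  -- CP is an up-set, any element of CN is a lower bound of CP
  obtain ⟨b, hb⟩ := hCNne
  have hbd : BddBelow CP := by
    refine ⟨b, fun l hl => ?_⟩
    by_contra hbl
    push_neg at hbl
    -- l < b, CP up-closed: b ∈ CP
    obtain ⟨u, hu1, hu2, hu3⟩ := hl
    have : Npred (-m) r (-b) := by
      refine ⟨u, hu1, hu2, le_trans hu3 ?_⟩
      have := hu2
      nlinarith
    exact hdisj b hb this
  set lstar := sInf CP with hls
  have hlsCP : lstar ∈ CP := hCPcl.csInf_mem hCPne hbd
  have hlsCN : lstar ∈ CN := by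
    have hIio : Set.Iio lstar ⊆ CN := by
      intro l hl
      rcases hcover l with h | h
      · exact h
      · exact absurd (csInf_le hbd h) (not_le.mpr hl)
    have : lstar ∈ closure (Set.Iio lstar) := by
      rw [closure_Iio]; exact Set.self_mem_Iic
    have := closure_mono hIio this
    rwa [hCNcl.closure_eq] at this
  exact hdisj lstar hlsCN hlsCP

end Aux

/-- Corollary of the pointwise pseudoconvexity proposition: with an additional
inner product `n₀` and constant `c > 0`, the condition `p(v,v) > c·n₀(v,v)` on
nonzero `m`-null vectors is equivalent to `p - l·m > c·n₀` for some `l ∈ ℝ`. -/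
theorem pointwise_pseudoconvexity_with_inner
    {V : Type*} [AddCommGroup V] [Module ℝ V] [FiniteDimensional ℝ V]
    (hdim : 1 < Module.finrank ℝ V)
    (m p n₀ : V →ₗ[ℝ] V →ₗ[ℝ] ℝ)
    (hm_symm : ∀ v w : V, m v w = m w v)
    (hm_nondeg : ∀ v : V, (∀ w : V, m v w = 0) → v = 0)
    (hp_symm : ∀ v w : V, p v w = p w v)
    (hn_symm : ∀ v w : V, n₀ v w = n₀ w v)
    (hn_pos : ∀ v : V, v ≠ 0 → 0 < n₀ v v)
    (c : ℝ) (hc : 0 < c) :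
    (∀ v : V, v ≠ 0 → m v v = 0 → c * n₀ v v < p v v) ↔
      ∃ l : ℝ, ∀ v : V, v ≠ 0 → c * n₀ v v < p v v - l * m v v := by
  constructor
  · intro h
    -- transfer to Fin n → ℝ
    set e := (Module.finBasis ℝ V).equivFun with he
    set r : V →ₗ[ℝ] V →ₗ[ℝ] ℝ := p - c • n₀ with hrdef
    have hrapp : ∀ x y : V, r x y = p x y - c * n₀ x y := by intro x y; simp [hrdef]
    set M : (Fin (Module.finrank ℝ V) → ℝ) →ₗ[ℝ] (Fin (Module.finrank ℝ V) → ℝ) →ₗ[ℝ] ℝ :=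
      m.compl₁₂ e.symm.toLinearMap e.symm.toLinearMap with hM
    set R : (Fin (Module.finrank ℝ V) → ℝ) →ₗ[ℝ] (Fin (Module.finrank ℝ V) → ℝ) →ₗ[ℝ] ℝ :=
      r.compl₁₂ e.symm.toLinearMap e.symm.toLinearMap with hR
    have hMapp : ∀ x y, M x y = m (e.symm x) (e.symm y) := fun x y => rfl
    have hRapp : ∀ x y, R x y = r (e.symm x) (e.symm y) := fun x y => rfl
    obtain ⟨l, hl⟩ := aux_main M R
      (fun x y => by rw [hMapp, hMapp, hm_symm])
      (fun x y => by rw [hRapp, hRapp, hrapp, hrapp, hp_symm, hn_symm])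
      (by
        intro x hx h0
        rw [hMapp] at h0
        have hx0 : e.symm x ≠ 0 := by
          simpa using (LinearEquiv.map_ne_zero_iff e.symm).mpr hx
        have := h (e.symm x) hx0 h0
        rw [hRapp, hrapp]; linarith)
    refine ⟨l, fun v hv => ?_⟩
    have hev : e v ≠ 0 := (LinearEquiv.map_ne_zero_iff e).mpr hv
    have := hl (e v) hev
    rw [hRapp, hMapp, LinearEquiv.symm_apply_apply, hrapp] at this
    linarith
  · rintro ⟨l, hl⟩ v hv h0
    have := hl v hv
    rw [h0] at this
    linarith
end

section
/- Let V be a real vector space of finite dimension n > 1, let m be a nondegenerate symmetric bilinear form on V that is indefinite (i.e., m(u,u) > 0 for some u ∈ V and m(w,w) < 0 for some w ∈ V), and let p be a symmetric bilinear form on V such that p(v,v) > 0 for every v ∈ V \ {0} with m(v,v) = 0. For λ ∈ ℝ, set Z_λ := { v ∈ V \ {0} : p(v,v) = λ·m(v,v) }. Then for every λ ∈ ℝ, exactly one of the following holds: Z_λ = ∅, or m(v,v) > 0 for every v ∈ Z_λ (and Z_λ ≠ ∅), or m(v,v) < 0 for every v ∈ Z_λ (and Z_λ ≠ ∅). -/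
set_option maxHeartbeats 1600000

private lemma core_no_mixed_signs
    {V : Type*} [AddCommGroup V] [Module ℝ V]
    (m p : V →ₗ[ℝ] V →ₗ[ℝ] ℝ)
    (hm_symm : ∀ v w : V, m v w = m w v)
    (hp_symm : ∀ v w : V, p v w = p w v)
    (hp_null : ∀ v : V, v ≠ 0 → m v v = 0 → 0 < p v v)
    (l : ℝ) (a b : V)
    (hpa : p a a = l * m a a) (hpb : p b b = l * m b b)
    (hA : 0 < m a a) (hB : m b b < 0) : False := by
  set A := m a a with hAdef
  set B := m b b with hBdef
  set M := m a b with hMdef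
  set S := p a b - l * M with hSdef
  -- key: every root t of B t² + 2 M t + A gives 0 < 2 t S
  have key : ∀ t : ℝ, B * t ^ 2 + 2 * M * t + A = 0 → 0 < 2 * t * S := by
    intro t ht
    set z := a + t • b with hzdef
    have hz0 : z ≠ 0 := by
      intro h
      have hab : a = (-t) • b := by
        have h' : a + t • b = 0 := h
        rw [neg_smul]
        linear_combination (norm := module) h'
      have hAt : A = t ^ 2 * B := by
        rw [hAdef, hab]
        simp [map_smul]
        ring
      nlinarith
    have hba : m b a = M := by rw [hMdef, hm_symm]
    have hpba : p b a = p a b := hp_symm b a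
    have hmz : m z z = B * t ^ 2 + 2 * M * t + A := by
      simp only [hzdef, map_add, map_smul, LinearMap.add_apply, LinearMap.smul_apply,
        smul_eq_mul, hba, ← hAdef, ← hBdef, ← hMdef]
      ring
    have hmz0 : m z z = 0 := by rw [hmz, ht]
    have hpz : 0 < p z z := hp_null z hz0 hmz0
    have hpzval : p z z = 2 * t * S := by
      have expand : p z z = p a a + t * p a b + t * p b a + t ^ 2 * p b b := by
        simp only [hzdef, map_add, map_smul, LinearMap.add_apply, LinearMap.smul_apply,
          smul_eq_mul]
        ring
      rw [expand, hpa, hpb, hpba, hSdef]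
      linear_combination l * ht
    rw [hpzval] at hpz
    exact hpz
  -- the quadratic B t² + 2 M t + A has two real roots of opposite signs
  have hD2pos : (0:ℝ) < M ^ 2 - A * B := by nlinarith
  set D := Real.sqrt (M ^ 2 - A * B) with hDdef
  have hDsq : D ^ 2 = M ^ 2 - A * B := Real.sq_sqrt (le_of_lt hD2pos)
  have hDpos : 0 ≤ D := Real.sqrt_nonneg _
  have hDgt : M ^ 2 < D ^ 2 := by nlinarith
  have hBne : B ≠ 0 := ne_of_lt hB
  have hroot : ∀ t : ℝ, t = (-M + D) / B ∨ t = (-M - D) / B →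
      B * t ^ 2 + 2 * M * t + A = 0 := by
    rintro t (rfl | rfl) <;> field_simp <;> nlinarith [hDsq]
  have h1 := key _ (hroot _ (Or.inl rfl))
  have h2 := key _ (hroot _ (Or.inr rfl))
  -- (-M + D) > 0 and (-M - D) < 0, B < 0
  have hMD1 : 0 < -M + D := by nlinarith [abs_nonneg M, sq_abs M]
  have hMD2 : -M - D < 0 := by nlinarith [sq_abs M]
  have ht1 : (-M + D) / B < 0 := div_neg_of_pos_of_neg hMD1 hB
  have ht2 : 0 < (-M - D) / B := div_pos_of_neg_of_neg hMD2 hB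
  nlinarith

/-- Lemma: for each `l ∈ ℝ`, the set `Z_l = {v ≠ 0 : p(v,v) = l·m(v,v)}` is either
empty, entirely contained in `{m(v,v) > 0}`, or entirely contained in `{m(v,v) < 0}`
(exactly one of these alternatives holds, as they are mutually exclusive). -/
theorem Zlambda_trichotomy
    {V : Type*} [AddCommGroup V] [Module ℝ V] [FiniteDimensional ℝ V]
    (hdim : 1 < Module.finrank ℝ V)
    (m p : V →ₗ[ℝ] V →ₗ[ℝ] ℝ)
    (hm_symm : ∀ v w : V, m v w = m w v)
    (hm_nondeg : ∀ v : V, (∀ w : V, m v w = 0) → v = 0)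
    (hm_indef_pos : ∃ u : V, 0 < m u u)
    (hm_indef_neg : ∃ w : V, m w w < 0)
    (hp_symm : ∀ v w : V, p v w = p w v)
    (hp_null : ∀ v : V, v ≠ 0 → m v v = 0 → 0 < p v v)
    (l : ℝ) (Z : Set V)
    (hZ : Z = {v : V | v ≠ 0 ∧ p v v = l * m v v}) :
    Z = ∅ ∨ (Z.Nonempty ∧ ∀ v ∈ Z, 0 < m v v) ∨ (Z.Nonempty ∧ ∀ v ∈ Z, m v v < 0) := by
  rcases Set.eq_empty_or_nonempty Z with hE | hNE
  · exact Or.inl hE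
  · obtain ⟨v0, hv0⟩ := hNE
    have hv0' : v0 ≠ 0 ∧ p v0 v0 = l * m v0 v0 := by rwa [hZ] at hv0
    have hsign : ∀ v ∈ Z, m v v ≠ 0 := by
      intro v hv
      rw [hZ] at hv
      intro hmv
      have := hp_null v hv.1 hmv
      rw [hv.2, hmv, mul_zero] at this
      exact lt_irrefl 0 this
    rcases lt_or_gt_of_ne (hsign v0 hv0) with hneg | hpos
    · refine Or.inr (Or.inr ⟨⟨v0, hv0⟩, ?_⟩)
      intro v hv
      rcases lt_or_gt_of_ne (hsign v hv) with h | h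
      · exact h
      · rw [hZ] at hv
        exact absurd (core_no_mixed_signs m p hm_symm hp_symm hp_null l v v0
          hv.2 hv0'.2 h hneg) not_false
    · refine Or.inr (Or.inl ⟨⟨v0, hv0⟩, ?_⟩)
      intro v hv
      rcases lt_or_gt_of_ne (hsign v hv) with h | h
      · rw [hZ] at hv
        exact absurd (core_no_mixed_signs m p hm_symm hp_symm hp_null l v0 v
          hv0'.2 hv.2 hpos h) not_false
      · exact h
end

section
/- Let V be a real vector space of finite dimension n > 1, let m be a nondegenerate symmetric bilinear form on V that is indefinite (i.e., m(u,u) > 0 for some u ∈ V and m(w,w) < 0 for some w ∈ V), and let p be a symmetric bilinear form on V such that p(v,v) > 0 for every v ∈ V \ {0} with m(v,v) = 0. Then there exists λ ∈ ℝ such that p(v,v) ≠ λ·m(v,v) for every v ∈ V \ {0}. -/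
private theorem contq_aux {n : ℕ} (B : (Fin n → ℝ) →ₗ[ℝ] (Fin n → ℝ) →ₗ[ℝ] ℝ) :
    Continuous fun x => B x x := by
  have key : ∀ x : Fin n → ℝ, B x x = ∑ i, x i * B (Pi.single i 1) x := by
    intro x
    have hx : (∑ i, Pi.single (M := fun _ : Fin n => ℝ) i (x i)) = x := Finset.univ_sum_single x
    have step : B x x = B (∑ i, Pi.single (M := fun _ : Fin n => ℝ) i (x i)) x := by rw [hx]
    rw [step, map_sum, LinearMap.sum_apply]
    refine Finset.sum_congr rfl fun i _ => ?_
    have h1 : Pi.single (M := fun _ : Fin n => ℝ) i (x i)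
        = x i • (Pi.single i (1:ℝ) : Fin n → ℝ) := by
      ext j
      by_cases h : i = j <;> simp [Pi.single_apply, h]
    rw [h1, map_smul, LinearMap.smul_apply, smul_eq_mul]
  rw [show (fun x => B x x) = fun x => ∑ i, x i * B (Pi.single i 1) x from funext key]
  exact continuous_finset_sum _ fun i _ =>
    (continuous_apply i).mul (B (Pi.single i 1)).continuous_of_finiteDimensional

set_option maxHeartbeats 1000000 in
private theorem key_gap {V : Type*} [AddCommGroup V] [Module ℝ V]
    (m p : V →ₗ[ℝ] V →ₗ[ℝ] ℝ)
    (hm_symm : ∀ v w : V, m v w = m w v)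
    (hp_symm : ∀ v w : V, p v w = p w v)
    (hp_null : ∀ v : V, v ≠ 0 → m v v = 0 → 0 < p v v)
    (a b : V) (ha : 0 < m a a) (hb : m b b < 0) :
    p b b / m b b < p a a / m a a := by
  by_contra hcon
  push_neg at hcon
  set lam := p b b / m b b with hlam
  have hMb : m b b ≠ 0 := ne_of_lt hb
  have hqb : p b b - lam * m b b = 0 := by
    rw [hlam, div_mul_cancel₀ _ hMb, sub_self]
  have hA : p a a - lam * m a a ≤ 0 := by
    have h1 : p a a ≤ lam * m a a := by
      have := (div_le_iff₀ ha).mp hcon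
      linarith
    linarith
  set A := p a a - lam * m a a with hAdef
  set B := p a b - lam * m a b with hBdef
  set Ma := m a a
  set Mb := m b b
  set Mab := m a b
  have hdisc : 0 < Mab ^ 2 - Ma * Mb := by nlinarith [sq_nonneg Mab]
  set s := Real.sqrt (Mab ^ 2 - Ma * Mb) with hsdef
  have hs2 : s ^ 2 = Mab ^ 2 - Ma * Mb := Real.sq_sqrt hdisc.le
  have hs0 : 0 ≤ s := Real.sqrt_nonneg _
  have hsabs : Mab ^ 2 < s ^ 2 := by nlinarith
  have hstep : ∀ r : ℝ, Ma * r ^ 2 + 2 * Mab * r + Mb = 0 → 0 < r ^ 2 * A + 2 * r * B := by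
    intro r hr
    have hu0 : r • a + b ≠ 0 := by
      intro h0
      have hb' : b = -(r • a) := by
        rw [add_comm] at h0
        exact eq_neg_of_add_eq_zero_left h0
      have hMbeq : Mb = r ^ 2 * Ma := by
        show m b b = _
        rw [hb']
        simp [map_smul, smul_eq_mul]
        ring
      nlinarith [sq_nonneg r]
    have hexpm : m (r • a + b) (r • a + b) = Ma * r ^ 2 + 2 * Mab * r + Mb := by
      simp only [map_add, map_smul, LinearMap.add_apply, LinearMap.smul_apply, smul_eq_mul]
      rw [hm_symm b a]
      show _ = m a a * r ^ 2 + 2 * m a b * r + m b b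
      ring
    have hnull : m (r • a + b) (r • a + b) = 0 := by rw [hexpm, hr]
    have hpu := hp_null _ hu0 hnull
    have hkey : p (r • a + b) (r • a + b) - lam * m (r • a + b) (r • a + b)
        = r ^ 2 * A + 2 * r * B + (p b b - lam * Mb) := by
      have hexpp : p (r • a + b) (r • a + b)
          = r ^ 2 * p a a + 2 * r * p a b + p b b := by
        simp only [map_add, map_smul, LinearMap.add_apply, LinearMap.smul_apply, smul_eq_mul]
        rw [hp_symm b a]
        ring
      rw [hexpp, hexpm, hAdef, hBdef]
      ring
    rw [hnull, hqb] at hkey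
    simp only [mul_zero, sub_zero, add_zero] at hkey
    linarith [hpu, hkey.symm.le]
  have hq2 := hstep ((-Mab + s) / Ma) (by field_simp; nlinarith [hs2])
  have hq1 := hstep ((-Mab - s) / Ma) (by field_simp; nlinarith [hs2])
  have hr2 : 0 < (-Mab + s) / Ma := div_pos (by nlinarith) ha
  have hr1 : (-Mab - s) / Ma < 0 := div_neg_of_neg_of_pos (by nlinarith) ha
  set r2 := (-Mab + s) / Ma
  set r1 := (-Mab - s) / Ma
  have hBpos : 0 < B := by nlinarith [sq_nonneg r2]
  have hBneg : B < 0 := by nlinarith [sq_nonneg r1]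
  linarith

set_option maxHeartbeats 1000000 in
/-- Lemma: there exists `l ∈ ℝ` so that the level set
`Z_l = {v ≠ 0 : p(v,v) = l·m(v,v)}` is empty. -/
theorem exists_empty_level_set
    {V : Type*} [AddCommGroup V] [Module ℝ V] [FiniteDimensional ℝ V]
    (hdim : 1 < Module.finrank ℝ V)
    (m p : V →ₗ[ℝ] V →ₗ[ℝ] ℝ)
    (hm_symm : ∀ v w : V, m v w = m w v)
    (hm_nondeg : ∀ v : V, (∀ w : V, m v w = 0) → v = 0)
    (hm_indef_pos : ∃ u : V, 0 < m u u)
    (hm_indef_neg : ∃ w : V, m w w < 0)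
    (hp_symm : ∀ v w : V, p v w = p w v)
    (hp_null : ∀ v : V, v ≠ 0 → m v v = 0 → 0 < p v v) :
    ∃ l : ℝ, ∀ v : V, v ≠ 0 → p v v ≠ l * m v v := by
  classical
  obtain ⟨u, hu⟩ := hm_indef_pos
  obtain ⟨w, hw⟩ := hm_indef_neg
  set n := Module.finrank ℝ V with hn
  let e : V ≃ₗ[ℝ] (Fin n → ℝ) := (Module.finBasis ℝ V).equivFun
  set M : (Fin n → ℝ) → ℝ := fun x => m (e.symm x) (e.symm x) with hM
  set P : (Fin n → ℝ) → ℝ := fun x => p (e.symm x) (e.symm x) with hP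
  have contM : Continuous M := by
    have := contq_aux (m.compl₁₂ (e.symm : (Fin n → ℝ) →ₗ[ℝ] V) (e.symm : (Fin n → ℝ) →ₗ[ℝ] V))
    simpa [LinearMap.compl₁₂_apply, hM] using this
  have contP : Continuous P := by
    have := contq_aux (p.compl₁₂ (e.symm : (Fin n → ℝ) →ₗ[ℝ] V) (e.symm : (Fin n → ℝ) →ₗ[ℝ] V))
    simpa [LinearMap.compl₁₂_apply, hP] using this
  -- transported null positivity
  have hPnull : ∀ x : Fin n → ℝ, x ≠ 0 → M x = 0 → 0 < P x := by
    intro x hx h0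
    exact hp_null (e.symm x) (by simpa using hx) h0
  -- the key gap inequality, transported
  have hkey : ∀ x y : Fin n → ℝ, 0 < M x → M y < 0 → P y / M y < P x / M x := by
    intro x y hx hy
    exact key_gap m p hm_symm hp_symm hp_null (e.symm x) (e.symm y) hx hy
  set S := Metric.sphere (0 : Fin n → ℝ) 1 with hS
  have hScompact : IsCompact S := isCompact_sphere 0 1
  have hmemS : ∀ x : Fin n → ℝ, x ∈ S ↔ ‖x‖ = 1 := by
    intro x; simp [hS]
  have hSne0 : ∀ x ∈ S, x ≠ 0 := by
    intro x hx h0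
    rw [hmemS] at hx
    rw [h0] at hx
    simp at hx
  -- normalization
  have hnorm : ∀ v : V, v ≠ 0 → ∃ x ∈ S, ∃ c : ℝ, 0 < c ∧ M x = c * m v v ∧ P x = c * p v v := by
    intro v hv
    have hev : e v ≠ 0 := by simpa using hv
    have hnev : ‖e v‖ ≠ 0 := norm_ne_zero_iff.mpr hev
    refine ⟨‖e v‖⁻¹ • e v, ?_, ‖e v‖⁻¹ ^ 2, by positivity, ?_, ?_⟩
    · rw [hmemS, norm_smul]
      simp [abs_of_nonneg (inv_nonneg.mpr (norm_nonneg _)), inv_mul_cancel₀ hnev]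
    · simp only [hM, map_smul, LinearMap.smul_apply, LinearEquiv.symm_apply_apply, smul_eq_mul]
      ring
    · simp only [hP, map_smul, LinearMap.smul_apply, LinearEquiv.symm_apply_apply, smul_eq_mul]
      ring
  -- claim 1 : uniform positivity of P near the null cone on the sphere
  obtain ⟨w₁, hw₁S, cw₁, hcw₁, hw₁M, hw₁P⟩ := hnorm w (fun h => by rw [h] at hw; simp at hw)
  obtain ⟨u₁, hu₁S, cu₁, hcu₁, hu₁M, hu₁P⟩ := hnorm u (fun h => by rw [h] at hu; simp at hu)
  have hMw₁ : M w₁ < 0 := by rw [hw₁M]; exact mul_neg_of_pos_of_neg hcw₁ hw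
  have hMu₁ : 0 < M u₁ := by rw [hu₁M]; exact mul_pos hcu₁ hu
  have hSne : S.Nonempty := ⟨u₁, hu₁S⟩
  obtain ⟨x₀, hx₀S, hx₀min⟩ := hScompact.exists_isMinOn hSne
    (Continuous.continuousOn (contP.max (continuous_abs.comp contM)))
  set c := max (P x₀) |M x₀| with hc
  have hcpos : 0 < c := by
    rcases lt_or_ge 0 c with h | h
    · exact h
    · exfalso
      have h1 : P x₀ ≤ 0 := le_trans (le_max_left _ _) h
      have h2 : |M x₀| ≤ 0 := le_trans (le_max_right _ _) h
      have h3 : M x₀ = 0 := abs_nonpos_iff.mp h2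
      exact absurd (hPnull x₀ (hSne0 x₀ hx₀S) h3) (by linarith)
  have claim1 : ∀ x ∈ S, |M x| ≤ c / 2 → c ≤ P x := by
    intro x hxS hxM
    have h0 : max (P x₀) |M x₀| ≤ max (P x) |M x| := by
      simpa only [Function.comp_apply, Set.mem_setOf_eq] using hx₀min hxS
    rcases le_max_iff.mp (le_trans (le_of_eq hc) h0) with h | h
    · exact h
    · exfalso; linarith
  set ε := c with hε
  set δ := c / 2 with hδ
  have hεpos : 0 < ε := hcpos
  have hδpos : 0 < δ := by positivity
  -- negative side max
  set t := P w₁ / M w₁ with ht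
  set δ₂ := min δ (min (-M w₁) (ε / max 1 (-t))) with hδ₂
  have hmaxt : (0:ℝ) < max 1 (-t) := lt_of_lt_of_le one_pos (le_max_left _ _)
  have hδ₂pos : 0 < δ₂ := by
    refine lt_min hδpos (lt_min (by linarith) (by positivity))
  have hδ₂δ : δ₂ ≤ δ := min_le_left _ _
  set C := {x | x ∈ S ∧ M x ≤ -δ₂} with hC
  have hCcompact : IsCompact C := by
    have : C = S ∩ M ⁻¹' Set.Iic (-δ₂) := rfl
    rw [this]
    exact hScompact.inter_right (isClosed_Iic.preimage contM)
  have hw₁C : w₁ ∈ C := by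
    refine ⟨hw₁S, ?_⟩
    have : δ₂ ≤ -M w₁ := le_trans (min_le_right _ _) (min_le_left _ _)
    linarith
  have hCf : ContinuousOn (fun x => P x / M x) C := by
    refine ContinuousOn.div contP.continuousOn contM.continuousOn ?_
    intro x hx
    have : M x ≤ -δ₂ := hx.2
    linarith
  obtain ⟨xs, hxsC, hxsmax⟩ := hCcompact.exists_isMaxOn ⟨w₁, hw₁C⟩ hCf
  set L := P xs / M xs with hL
  have hMxs : M xs < 0 := by have := hxsC.2; linarith
  have lemA : ∀ x ∈ S, M x < 0 → P x / M x ≤ L := by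
    intro x hxS hxM
    rcases le_or_gt (M x) (-δ₂) with h | h
    · exact hxsmax ⟨hxS, h⟩
    · -- near the null cone
      have habs : |M x| ≤ δ := by
        rw [abs_of_neg hxM]; linarith
      have hPx : ε ≤ P x := claim1 x hxS habs
      have htMx : t * M x ≤ P x := by
        have h1 : t * M x ≤ ε := by
          rcases le_or_gt 0 t with hts | hts
          · nlinarith
          · have h2 : -t ≤ max 1 (-t) := le_max_right _ _
            have h3 : δ₂ ≤ ε / max 1 (-t) := le_trans (min_le_right _ _) (min_le_right _ _)
            have h4 : δ₂ * max 1 (-t) ≤ ε := by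
              rw [← le_div_iff₀ hmaxt]; exact h3
            nlinarith
        linarith
      have h5 : P x / M x ≤ t := by
        rw [div_le_iff_of_neg hxM]
        linarith [htMx]
      exact le_trans h5 (hxsmax hw₁C)
  -- positive side min
  set s := P u₁ / M u₁ with hs
  set δ₃ := min δ (min (M u₁) (ε / max 1 s)) with hδ₃
  have hmaxs : (0:ℝ) < max 1 s := lt_of_lt_of_le one_pos (le_max_left _ _)
  have hδ₃pos : 0 < δ₃ := lt_min hδpos (lt_min hMu₁ (by positivity))
  have hδ₃δ : δ₃ ≤ δ := min_le_left _ _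
  set C' := {x | x ∈ S ∧ δ₃ ≤ M x} with hC'
  have hC'compact : IsCompact C' := by
    have : C' = S ∩ M ⁻¹' Set.Ici δ₃ := rfl
    rw [this]
    exact hScompact.inter_right (isClosed_Ici.preimage contM)
  have hu₁C' : u₁ ∈ C' := by
    refine ⟨hu₁S, le_trans (min_le_right _ _) (min_le_left _ _)⟩
  have hC'f : ContinuousOn (fun x => P x / M x) C' := by
    refine ContinuousOn.div contP.continuousOn contM.continuousOn ?_
    intro x hx
    have := hx.2
    linarith
  obtain ⟨ys, hysC', hysmin⟩ := hC'compact.exists_isMinOn ⟨u₁, hu₁C'⟩ hC'f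
  set U := P ys / M ys with hU
  have hMys : 0 < M ys := lt_of_lt_of_le hδ₃pos hysC'.2
  have lemB : ∀ x ∈ S, 0 < M x → U ≤ P x / M x := by
    intro x hxS hxM
    rcases le_or_gt δ₃ (M x) with h | h
    · exact hysmin ⟨hxS, h⟩
    · have habs : |M x| ≤ δ := by
        rw [abs_of_pos hxM]; linarith
      have hPx : ε ≤ P x := claim1 x hxS habs
      have hsMx : s * M x ≤ P x := by
        have h1 : s * M x ≤ ε := by
          rcases le_or_gt s 0 with hts | hts
          · nlinarith
          · have h2 : s ≤ max 1 s := le_max_right _ _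
            have h3 : δ₃ ≤ ε / max 1 s := le_trans (min_le_right _ _) (min_le_right _ _)
            have h4 : δ₃ * max 1 s ≤ ε := by
              rw [← le_div_iff₀ hmaxs]; exact h3
            nlinarith
        linarith
      have h5 : s ≤ P x / M x := by
        rw [le_div_iff₀ hxM]
        linarith
      exact le_trans (hysmin hu₁C') h5
  have hLU : L < U := hkey ys xs hMys hMxs
  refine ⟨(L + U) / 2, ?_⟩
  intro v hv hcontra
  obtain ⟨x, hxS, cv, hcv, hMx, hPx⟩ := hnorm v hv
  have hPMx : P x = (L + U) / 2 * M x := by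
    rw [hPx, hMx, hcontra]; ring
  rcases lt_trichotomy (M x) 0 with h | h | h
  · have := lemA x hxS h
    rw [hPMx] at this
    rw [mul_div_assoc, div_self (ne_of_lt h), mul_one] at this
    linarith
  · have : ε ≤ P x := claim1 x hxS (by rw [h]; simpa using hδpos.le)
    rw [hPMx, h, mul_zero] at this
    linarith
  · have := lemB x hxS h
    rw [hPMx] at this
    rw [mul_div_assoc, div_self (ne_of_gt h), mul_one] at this
    linarith
end

section
/- Let V be a real vector space of finite dimension n > 1, let m be a nondegenerate symmetric bilinear form on V that is indefinite (i.e., m(u,u) > 0 for some u ∈ V and m(w,w) < 0 for some w ∈ V), and let p be a symmetric bilinear form on V such that p(v,v) > 0 for every v ∈ V \ {0} with m(v,v) = 0. Then the quantity c₊ := inf { p(v,v)/m(v,v) : v ∈ V, m(v,v) > 0 } and the quantity c₋ := sup { p(v,v)/m(v,v) : v ∈ V, m(v,v) < 0 } are finite real numbers, both are attained (the infimum by some v with m(v,v) > 0 and the supremum by some v with m(v,v) < 0), and c₋ < c₊. -/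
open Set Metric

section AuxRatio

variable {W : Type*} [NormedAddCommGroup W] [NormedSpace ℝ W] [FiniteDimensional ℝ W]

private lemma bilin_cont_aux (B : W →ₗ[ℝ] W →ₗ[ℝ] ℝ) : Continuous fun x => B x x := by
  let B₁ : W →ₗ[ℝ] (W →L[ℝ] ℝ) :=
    (LinearMap.toContinuousLinearMap : (W →ₗ[ℝ] ℝ) ≃ₗ[ℝ] (W →L[ℝ] ℝ)).toLinearMap.comp B
  let B₂ : W →L[ℝ] (W →L[ℝ] ℝ) := LinearMap.toContinuousLinearMap B₁
  have h : (fun x => B x x) = fun x => B₂ x x := rfl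
  rw [h]
  exact isBoundedBilinearMap_apply.continuous.comp (B₂.continuous.prodMk continuous_id)

private lemma ratio_isLeast_aux (B C : W →ₗ[ℝ] W →ₗ[ℝ] ℝ)
    (hpos : ∃ u : W, 0 < B u u)
    (hnull : ∀ x : W, x ≠ 0 → B x x = 0 → 0 < C x x) :
    ∃ c : ℝ, IsLeast {r : ℝ | ∃ x : W, 0 < B x x ∧ r = C x x / B x x} c := by
  have hBc : Continuous fun x => B x x := bilin_cont_aux B
  have hCc : Continuous fun x => C x x := bilin_cont_aux C
  have hBs : ∀ (c : ℝ) (x : W), B (c • x) (c • x) = c ^ 2 * B x x := by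
    intro c x
    simp only [map_smul, LinearMap.smul_apply, smul_eq_mul]
    ring
  have hCs : ∀ (c : ℝ) (x : W), C (c • x) (c • x) = c ^ 2 * C x x := by
    intro c x
    simp only [map_smul, LinearMap.smul_apply, smul_eq_mul]
    ring
  have hS : IsCompact (sphere (0 : W) 1) := isCompact_sphere 0 1
  obtain ⟨u, hu⟩ := hpos
  have hu0 : u ≠ 0 := by rintro rfl; simp at hu
  have hnu : ‖u‖ ≠ 0 := norm_ne_zero_iff.mpr hu0
  set x₀ : W := ‖u‖⁻¹ • u with hx₀def
  have hx₀S : x₀ ∈ sphere (0 : W) 1 := by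
    simp [hx₀def, norm_smul, abs_of_nonneg (inv_nonneg.mpr (norm_nonneg u)),
      inv_mul_cancel₀ hnu]
  have hx₀pos : 0 < B x₀ x₀ := by
    rw [hx₀def, hBs]
    exact mul_pos (pow_pos (inv_pos.mpr (norm_pos_iff.mpr hu0)) 2) hu
  -- set where C ≤ 0 and B ≥ 0 on the sphere
  set F : Set W := sphere (0 : W) 1 ∩
      ((fun x => B x x) ⁻¹' Ici 0 ∩ (fun x => C x x) ⁻¹' Iic 0) with hFdef
  have hFc : IsCompact F :=
    hS.inter_right ((isClosed_Ici.preimage hBc).inter (isClosed_Iic.preimage hCc))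
  have hFpos : ∀ x ∈ F, 0 < B x x := by
    rintro x ⟨hxS, hx1, hx2⟩
    have hx1' : (0:ℝ) ≤ B x x := hx1
    rcases lt_or_eq_of_le hx1' with h | h
    · exact h
    · exfalso
      have hx0 : x ≠ 0 := by
        intro h0; rw [h0] at hxS
        simp at hxS
      exact absurd (hnull x hx0 h.symm) (not_lt.mpr (Set.mem_Iic.mp hx2))
  obtain ⟨δ₀, hδ₀pos, hδ₀⟩ : ∃ δ > (0 : ℝ), ∀ x ∈ F, δ ≤ B x x := by
    rcases F.eq_empty_or_nonempty with hF | hF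
    · exact ⟨1, one_pos, by rw [hF]; simp⟩
    · obtain ⟨z, hzF, hz⟩ := hFc.exists_isMinOn hF hBc.continuousOn
      exact ⟨B z z, hFpos z hzF, fun x hx => isMinOn_iff.mp hz x hx⟩
  set δ : ℝ := min δ₀ (B x₀ x₀) with hδdef
  have hδpos : 0 < δ := lt_min hδ₀pos hx₀pos
  have hsmall : ∀ x ∈ sphere (0 : W) 1, 0 ≤ B x x → B x x < δ → 0 < C x x := by
    intro x hxS h0 hlt
    by_contra hC
    have hxF : x ∈ F := ⟨hxS, Set.mem_Ici.mpr h0, Set.mem_Iic.mpr (not_lt.mp hC)⟩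
    exact absurd hlt (not_lt.mpr (le_trans (min_le_left _ _) (hδ₀ x hxF)))
  set K : Set W := sphere (0 : W) 1 ∩ ((fun x => B x x) ⁻¹' Icc 0 (δ / 2)) with hKdef
  have hKc : IsCompact K := hS.inter_right (isClosed_Icc.preimage hBc)
  obtain ⟨α, hαpos, hα⟩ : ∃ α > (0 : ℝ), ∀ x ∈ K, α ≤ C x x := by
    rcases K.eq_empty_or_nonempty with hK | hK
    · exact ⟨1, one_pos, by rw [hK]; simp⟩
    · obtain ⟨z, hzK, hz⟩ := hKc.exists_isMinOn hK hCc.continuousOn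
      refine ⟨C z z, ?_, fun x hx => isMinOn_iff.mp hz x hx⟩
      obtain ⟨hzS, hzI⟩ := hzK
      have hzI' : B z z ∈ Icc 0 (δ / 2) := hzI
      exact hsmall z hzS hzI'.1 (lt_of_le_of_lt hzI'.2 (by linarith))
  set K₁ : Set W := sphere (0 : W) 1 ∩ ((fun x => B x x) ⁻¹' Ici (δ / 2)) with hK₁def
  have hK₁c : IsCompact K₁ := hS.inter_right (isClosed_Ici.preimage hBc)
  have hx₀K₁ : x₀ ∈ K₁ := by
    refine ⟨hx₀S, show δ / 2 ≤ B x₀ x₀ from ?_⟩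
    have hδle : δ ≤ B x₀ x₀ := min_le_right δ₀ (B x₀ x₀)
    linarith
  set f : W → ℝ := fun x => C x x / B x x with hfdef
  have hfcont : ∀ (η : ℝ), 0 < η →
      ContinuousOn f (sphere (0 : W) 1 ∩ ((fun x => B x x) ⁻¹' Ici η)) := by
    intro η hη
    exact ContinuousOn.div hCc.continuousOn hBc.continuousOn
      (fun x hx => ne_of_gt (lt_of_lt_of_le hη (hx.2 : η ≤ B x x)))
  obtain ⟨y₁, hy₁K, hy₁min⟩ := hK₁c.exists_isMinOn ⟨x₀, hx₀K₁⟩ (hfcont (δ / 2) (by linarith))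
  set r₁ : ℝ := f y₁ with hr₁def
  set η : ℝ := min (δ / 2) (α / (|r₁| + 1)) with hηdef
  have habs : (0 : ℝ) < |r₁| + 1 := by positivity
  have hηpos : 0 < η := lt_min (by linarith) (div_pos hαpos habs)
  set K₂ : Set W := sphere (0 : W) 1 ∩ ((fun x => B x x) ⁻¹' Ici η) with hK₂def
  have hK₂c : IsCompact K₂ := hS.inter_right (isClosed_Ici.preimage hBc)
  have hsub : K₁ ⊆ K₂ := by
    rintro x ⟨hx1, hx2⟩
    have hx2' : δ / 2 ≤ B x x := hx2
    exact ⟨hx1, show η ≤ B x x from le_trans (min_le_left _ _) hx2'⟩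
  obtain ⟨y₂, hy₂K, hy₂min⟩ := hK₂c.exists_isMinOn ⟨y₁, hsub hy₁K⟩ (hfcont η hηpos)
  have hy₂lb : ∀ x ∈ K₂, f y₂ ≤ f x := fun x hx => isMinOn_iff.mp hy₂min x hx
  have hy₂pos : 0 < B y₂ y₂ := lt_of_lt_of_le hηpos (hy₂K.2 : η ≤ B y₂ y₂)
  refine ⟨f y₂, ⟨y₂, hy₂pos, rfl⟩, ?_⟩
  rintro r ⟨x, hx, rfl⟩
  have hx0 : x ≠ 0 := by rintro rfl; simp at hx
  have hnx : ‖x‖ ≠ 0 := norm_ne_zero_iff.mpr hx0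
  set y : W := ‖x‖⁻¹ • x with hydef
  have hyS : y ∈ sphere (0 : W) 1 := by
    simp [hydef, norm_smul, abs_of_nonneg (inv_nonneg.mpr (norm_nonneg x)),
      inv_mul_cancel₀ hnx]
  have hc2 : (‖x‖⁻¹ : ℝ) ^ 2 ≠ 0 := pow_ne_zero 2 (inv_ne_zero hnx)
  have hBy : B y y = ‖x‖⁻¹ ^ 2 * B x x := hBs _ _
  have hCy : C y y = ‖x‖⁻¹ ^ 2 * C x x := hCs _ _
  have hypos : 0 < B y y := by
    rw [hBy]
    exact mul_pos (lt_of_le_of_ne (sq_nonneg _) (Ne.symm hc2)) hx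
  have hfy : f y = C x x / B x x := by
    show C y y / B y y = C x x / B x x
    rw [hBy, hCy]
    exact mul_div_mul_left _ _ hc2
  rw [← hfy]
  rcases le_or_gt η (B y y) with hcase | hcase
  · exact hy₂lb y ⟨hyS, show η ≤ B y y from hcase⟩
  · have hyK : y ∈ K := by
      refine ⟨hyS, Set.mem_Icc.mpr ⟨le_of_lt hypos, ?_⟩⟩
      have : η ≤ δ / 2 := min_le_left _ _
      linarith
    have hαy : α ≤ C y y := hα y hyK
    have h2 : α / B y y ≤ f y := by
      show α / B y y ≤ C y y / B y y
      exact div_le_div_of_nonneg_right hαy hypos.le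
    have h3 : α / η < α / B y y := div_lt_div_of_pos_left hαpos hypos hcase
    have h5 : η ≤ α / (|r₁| + 1) := min_le_right _ _
    have h6 : η * (|r₁| + 1) ≤ α := (le_div_iff₀ habs).mp h5
    have h4 : |r₁| + 1 ≤ α / η := (le_div_iff₀ hηpos).mpr (by nlinarith)
    have h7 : f y₂ ≤ r₁ := hy₂lb y₁ (hsub hy₁K)
    have h8 : r₁ ≤ |r₁| := le_abs_self r₁
    linarith

end AuxRatio

private lemma quad_contra (a b t₀ t₁ : ℝ) (ha : a ≤ 0) (hprod : t₀ * t₁ < 0)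
    (h0 : 0 < a * t₀ ^ 2 + 2 * b * t₀) (h1 : 0 < a * t₁ ^ 2 + 2 * b * t₁) : False := by
  have hane : 0 ≤ (-a) * (-(t₀ * t₁)) := mul_nonneg (neg_nonneg.mpr ha) (neg_nonneg.mpr hprod.le)
  rcases lt_trichotomy t₀ 0 with ht₀ | ht₀ | ht₀
  · have ht₁ : 0 < t₁ := by
      rcases lt_trichotomy t₁ 0 with h | h | h
      · exact absurd (mul_pos_of_neg_of_neg ht₀ h) (not_lt.mpr hprod.le)
      · rw [h, mul_zero] at hprod; exact absurd hprod (lt_irrefl 0)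
      · exact h
    have hsum := add_pos (mul_pos h0 ht₁) (mul_pos h1 (neg_pos.mpr ht₀))
    have hT : 0 ≤ (-a) * (-(t₀ * t₁)) * (t₁ - t₀) := mul_nonneg hane (by linarith)
    nlinarith [hsum, hT]
  · rw [ht₀] at hprod; simp at hprod
  · have ht₁ : t₁ < 0 := by
      rcases lt_trichotomy t₁ 0 with h | h | h
      · exact h
      · rw [h, mul_zero] at hprod; exact absurd hprod (lt_irrefl 0)
      · exact absurd (mul_pos ht₀ h) (not_lt.mpr hprod.le)
    have hsum := add_pos (mul_pos h0 (neg_pos.mpr ht₁)) (mul_pos h1 ht₀)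
    have hT : 0 ≤ (-a) * (-(t₀ * t₁)) * (t₀ - t₁) := mul_nonneg hane (by linarith)
    nlinarith [hsum, hT]

private lemma gap_aux {V : Type*} [AddCommGroup V] [Module ℝ V]
    (m p : V →ₗ[ℝ] V →ₗ[ℝ] ℝ)
    (hm_symm : ∀ v w : V, m v w = m w v)
    (hp_symm : ∀ v w : V, p v w = p w v)
    (hp_null : ∀ v : V, v ≠ 0 → m v v = 0 → 0 < p v v)
    (cplus cminus : ℝ) (vp vm : V)
    (hQp : 0 < m vp vp) (hQm : m vm vm < 0)
    (hcp : cplus = p vp vp / m vp vp) (hcm : cminus = p vm vm / m vm vm)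
    (hlt : cplus ≤ cminus) : False := by
  set A : ℝ := m vm vm with hAdef
  set Bm : ℝ := m vp vm with hBmdef
  set Cq : ℝ := m vp vp with hCqdef
  have hA : A < 0 := hQm
  have hCq : 0 < Cq := hQp
  have hPp : p vp vp = cplus * Cq := by
    rw [eq_div_iff (ne_of_gt hCq)] at hcp
    linarith [hcp]
  have hPm : p vm vm = cminus * A := by
    rw [eq_div_iff (ne_of_lt hA)] at hcm
    linarith [hcm]
  have hdisc : 0 < Bm ^ 2 - A * Cq := by nlinarith
  set D : ℝ := Real.sqrt (Bm ^ 2 - A * Cq) with hDdef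
  have hD2 : D ^ 2 = Bm ^ 2 - A * Cq := Real.sq_sqrt (le_of_lt hdisc)
  have hDpos : 0 < D := Real.sqrt_pos.mpr hdisc
  set t₀ : ℝ := (-Bm - D) / A with ht₀def
  set t₁ : ℝ := (-Bm + D) / A with ht₁def
  have hAne : A ≠ 0 := ne_of_lt hA
  clear_value A Bm Cq D t₀ t₁
  have key0 : A * t₀ = -Bm - D := by
    rw [ht₀def, mul_div_cancel₀ _ hAne]
  have key1 : A * t₁ = -Bm + D := by
    rw [ht₁def, mul_div_cancel₀ _ hAne]
  have hq0 : A * t₀ ^ 2 + 2 * Bm * t₀ + Cq = 0 := by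
    have h : A * (A * t₀ ^ 2 + 2 * Bm * t₀ + Cq) = 0 := by
      linear_combination (A * t₀ + Bm - D) * key0 + hD2
    exact (mul_eq_zero.mp h).resolve_left hAne
  have hq1 : A * t₁ ^ 2 + 2 * Bm * t₁ + Cq = 0 := by
    have h : A * (A * t₁ ^ 2 + 2 * Bm * t₁ + Cq) = 0 := by
      linear_combination (A * t₁ + Bm + D) * key1 + hD2
    exact (mul_eq_zero.mp h).resolve_left hAne
  have hprod : t₀ * t₁ < 0 := by
    have h9 : A ^ 2 * (t₀ * t₁) = A * Cq := by
      linear_combination (A * t₁) * key0 + (-Bm - D) * key1 - hD2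
    have hACq : A * Cq < 0 := mul_neg_of_neg_of_pos hA hCq
    have hA2 : 0 < A ^ 2 := by positivity
    nlinarith
  -- expansions
  have hmq : ∀ t : ℝ, m (vp + t • vm) (vp + t • vm) = A * t ^ 2 + 2 * Bm * t + Cq := by
    intro t
    simp only [map_add, map_smul, LinearMap.add_apply, LinearMap.smul_apply, smul_eq_mul]
    rw [hAdef, hBmdef, hCqdef]
    linear_combination t * hm_symm vm vp
  have hpq : ∀ t : ℝ, p (vp + t • vm) (vp + t • vm)
      = (p vm vm) * t ^ 2 + 2 * (p vp vm) * t + p vp vp := by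
    intro t
    simp only [map_add, map_smul, LinearMap.add_apply, LinearMap.smul_apply, smul_eq_mul]
    linear_combination t * hp_symm vm vp
  have hwne : ∀ t : ℝ, vp + t • vm ≠ 0 := by
    intro t h
    have hv : vp = (-t) • vm := by
      rw [neg_smul]
      rw [add_eq_zero_iff_eq_neg] at h
      exact h
    have : Cq = t ^ 2 * A := by
      rw [hCqdef, hv, hAdef]
      simp only [map_smul, LinearMap.smul_apply, smul_eq_mul]
      ring
    nlinarith
  set a : ℝ := p vm vm - cplus * A with hadef
  set b : ℝ := p vp vm - cplus * Bm with hbdef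
  clear_value a b
  have ha : a ≤ 0 := by
    rw [hadef, hPm]
    nlinarith
  have hr : ∀ t : ℝ, A * t ^ 2 + 2 * Bm * t + Cq = 0 →
      0 < a * t ^ 2 + 2 * b * t := by
    intro t hqt
    have hne := hwne t
    have hmnull : m (vp + t • vm) (vp + t • vm) = 0 := by rw [hmq t]; exact hqt
    have hppos : 0 < p (vp + t • vm) (vp + t • vm) := hp_null _ hne hmnull
    rw [hpq t] at hppos
    have : a * t ^ 2 + 2 * b * t
        = ((p vm vm) * t ^ 2 + 2 * (p vp vm) * t + p vp vp)
          - cplus * (A * t ^ 2 + 2 * Bm * t + Cq) := by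
      rw [hadef, hbdef, hPp]; ring
    rw [this, hqt]
    simpa using hppos
  exact quad_contra a b t₀ t₁ ha hprod (hr t₀ hq0) (hr t₁ hq1)


/-- Lemma: the infimum `c₊` of `p(v,v)/m(v,v)` over `{m(v,v) > 0}` and the supremum
`c₋` of `p(v,v)/m(v,v)` over `{m(v,v) < 0}` are finite, both are attained, and
`c₋ < c₊`. -/
theorem ratio_inf_sup_attained_and_gap
    {V : Type*} [AddCommGroup V] [Module ℝ V] [FiniteDimensional ℝ V]
    (hdim : 1 < Module.finrank ℝ V)
    (m p : V →ₗ[ℝ] V →ₗ[ℝ] ℝ)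
    (hm_symm : ∀ v w : V, m v w = m w v)
    (hm_nondeg : ∀ v : V, (∀ w : V, m v w = 0) → v = 0)
    (hm_indef_pos : ∃ u : V, 0 < m u u)
    (hm_indef_neg : ∃ w : V, m w w < 0)
    (hp_symm : ∀ v w : V, p v w = p w v)
    (hp_null : ∀ v : V, v ≠ 0 → m v v = 0 → 0 < p v v) :
    ∃ cplus cminus : ℝ,
      IsGLB {r : ℝ | ∃ v : V, 0 < m v v ∧ r = p v v / m v v} cplus ∧
      cplus ∈ {r : ℝ | ∃ v : V, 0 < m v v ∧ r = p v v / m v v} ∧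
      IsLUB {r : ℝ | ∃ v : V, m v v < 0 ∧ r = p v v / m v v} cminus ∧
      cminus ∈ {r : ℝ | ∃ v : V, m v v < 0 ∧ r = p v v / m v v} ∧
      cminus < cplus := by
  classical
  set n := Module.finrank ℝ V with hn
  let e : V ≃ₗ[ℝ] (Fin n → ℝ) := (Module.finBasis ℝ V).equivFun
  set B : (Fin n → ℝ) →ₗ[ℝ] (Fin n → ℝ) →ₗ[ℝ] ℝ :=
    m.compl₁₂ e.symm.toLinearMap e.symm.toLinearMap with hBdef
  set C : (Fin n → ℝ) →ₗ[ℝ] (Fin n → ℝ) →ₗ[ℝ] ℝ :=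
    p.compl₁₂ e.symm.toLinearMap e.symm.toLinearMap with hCdef
  have hBapp : ∀ x y : Fin n → ℝ, B x y = m (e.symm x) (e.symm y) := fun x y => rfl
  have hCapp : ∀ x y : Fin n → ℝ, C x y = p (e.symm x) (e.symm y) := fun x y => rfl
  -- set equalities
  have hsetP : {r : ℝ | ∃ v : V, 0 < m v v ∧ r = p v v / m v v}
      = {r : ℝ | ∃ x : Fin n → ℝ, 0 < B x x ∧ r = C x x / B x x} := by
    ext r
    constructor
    · rintro ⟨v, h1, h2⟩
      exact ⟨e v, by rw [hBapp, e.symm_apply_apply]; exact h1,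
        by rw [hBapp, hCapp, e.symm_apply_apply]; exact h2⟩
    · rintro ⟨x, h1, h2⟩
      exact ⟨e.symm x, by rw [← hBapp]; exact h1, by rw [← hBapp, ← hCapp]; exact h2⟩
  have hsetM : {r : ℝ | ∃ v : V, m v v < 0 ∧ r = p v v / m v v}
      = {r : ℝ | ∃ x : Fin n → ℝ, B x x < 0 ∧ r = C x x / B x x} := by
    ext r
    constructor
    · rintro ⟨v, h1, h2⟩
      exact ⟨e v, by rw [hBapp, e.symm_apply_apply]; exact h1,
        by rw [hBapp, hCapp, e.symm_apply_apply]; exact h2⟩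
    · rintro ⟨x, h1, h2⟩
      exact ⟨e.symm x, by rw [← hBapp]; exact h1, by rw [← hBapp, ← hCapp]; exact h2⟩
  have hnull' : ∀ x : Fin n → ℝ, x ≠ 0 → B x x = 0 → 0 < C x x := by
    intro x hx h0
    rw [hCapp]
    refine hp_null _ (fun h => hx ?_) (by rw [hBapp] at h0; exact h0)
    have := congrArg e h
    simpa using this
  -- infimum part
  obtain ⟨cplus, hcplusLeast⟩ := ratio_isLeast_aux B C
    (by obtain ⟨u, hu⟩ := hm_indef_pos
        exact ⟨e u, by rw [hBapp, e.symm_apply_apply]; exact hu⟩)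
    hnull'
  -- supremum part via -B
  obtain ⟨c', hc'Least⟩ := ratio_isLeast_aux (-B) C
    (by obtain ⟨w, hw⟩ := hm_indef_neg
        refine ⟨e w, ?_⟩
        have : B (e w) (e w) < 0 := by rw [hBapp, e.symm_apply_apply]; exact hw
        simpa using this)
    (by intro x hx h0
        apply hnull' x hx
        simpa using h0)
  set cminus : ℝ := -c' with hcminusdef
  have hGreatest : IsGreatest {r : ℝ | ∃ x : Fin n → ℝ, B x x < 0 ∧ r = C x x / B x x} cminus := by
    constructor
    · obtain ⟨⟨x, hx1, hx2⟩, _⟩ := hc'Least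
      have hxneg : B x x < 0 := by simpa using hx1
      refine ⟨x, hxneg, ?_⟩
      have : c' = C x x / (-(B x x)) := by simpa using hx2
      rw [hcminusdef, this, div_neg, neg_neg]
    · rintro r ⟨x, hx1, hx2⟩
      have hmem : -r ∈ {r : ℝ | ∃ x : Fin n → ℝ, 0 < (-B) x x ∧ r = C x x / ((-B) x x)} := by
        refine ⟨x, by simpa using hx1, ?_⟩
        simp only [LinearMap.neg_apply, Pi.neg_apply]
        rw [div_neg, ← hx2]
      have := hc'Least.2 hmem
      rw [hcminusdef]
      linarith
  have hcplusMem : cplus ∈ {r : ℝ | ∃ v : V, 0 < m v v ∧ r = p v v / m v v} := by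
    rw [hsetP]; exact hcplusLeast.1
  have hcminusMem : cminus ∈ {r : ℝ | ∃ v : V, m v v < 0 ∧ r = p v v / m v v} := by
    rw [hsetM]; exact hGreatest.1
  refine ⟨cplus, cminus, ?_, hcplusMem, ?_, hcminusMem, ?_⟩
  · rw [hsetP]; exact hcplusLeast.isGLB
  · rw [hsetM]; exact hGreatest.isLUB
  · -- the gap
    obtain ⟨vp, hQp, hcp⟩ := hcplusMem
    obtain ⟨vm, hQm, hcm⟩ := hcminusMem
    by_contra hlt
    push_neg at hlt
    exact gap_aux m p hm_symm hp_symm hp_null cplus cminus vp vm hQp hQm hcp hcm hlt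
end

section
/- Let b, c be real numbers with 0 ≤ b < c, set ω := √(c² − b²), let W₊ := W₊(b,c), and define η(τ) := e^{−b|τ|}·sin(W₊ − ω·|τ|) for τ ∈ ℝ. Then η is twice continuously differentiable on all of ℝ, is infinitely differentiable on ℝ \ {0}, and satisfies η(0) = ω/c, η'(0) = 0, and η''(0) = −c·ω. -/
open Real

/-- Regularity of the Carleman weight profile `η`: it is `C²` on all of `ℝ`,
infinitely differentiable away from `0`, and satisfies `η(0) = ω/c`,
`η'(0) = 0`, `η''(0) = -c·ω`. -/
theorem eta_regularity
    (b c W : ℝ) (hb : 0 ≤ b) (hbc : b < c)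
    (hW : W ∈ Set.Ico (π / 2) π) (hcosW : Real.cos W = -(b / c))
    (ω : ℝ) (hω : ω = Real.sqrt (c ^ 2 - b ^ 2))
    (η : ℝ → ℝ)
    (hη : ∀ τ : ℝ, η τ = Real.exp (-(b * |τ|)) * Real.sin (W - ω * |τ|)) :
    ContDiff ℝ 2 η ∧
      ContDiffOn ℝ (⊤ : ℕ∞) η {(0 : ℝ)}ᶜ ∧
      η 0 = ω / c ∧ deriv η 0 = 0 ∧ deriv (deriv η) 0 = -(c * ω) := by
  have hc : 0 < c := lt_of_le_of_lt hb hbc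
  have hc0 : c ≠ 0 := ne_of_gt hc
  have hsq : (0:ℝ) ≤ c ^ 2 - b ^ 2 := by nlinarith
  have hω2 : ω ^ 2 = c ^ 2 - b ^ 2 := by rw [hω, Real.sq_sqrt hsq]
  have hω0 : 0 ≤ ω := hω ▸ Real.sqrt_nonneg _
  have hcosWc : Real.cos W * c = -b := by
    rw [hcosW]; field_simp
  have hsinWc : Real.sin W * c = ω := by
    have h0 : 0 ≤ W := le_trans (by positivity) hW.1
    have h1 : 0 ≤ Real.sin W := Real.sin_nonneg_of_nonneg_of_le_pi h0 hW.2.le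
    have h2 : (Real.sin W * c) ^ 2 = ω ^ 2 := by
      have hpy := Real.sin_sq_add_cos_sq W
      have : (Real.cos W * c) ^ 2 = b ^ 2 := by rw [hcosWc]; ring
      nlinarith [hpy, this, hω2]
    calc Real.sin W * c = Real.sqrt ((Real.sin W * c) ^ 2) :=
          (Real.sqrt_sq (by positivity)).symm
      _ = Real.sqrt (ω ^ 2) := by rw [h2]
      _ = ω := Real.sqrt_sq hω0
  have hsinW : Real.sin W = ω / c := by
    rw [eq_div_iff hc0]; exact hsinWc
  -- key trig identity
  have key : ∀ x : ℝ, b * Real.sin (W - x) + ω * Real.cos (W - x) = c * Real.sin x := by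
    intro x
    refine mul_left_cancel₀ hc0 ?_
    rw [Real.sin_sub, Real.cos_sub]
    linear_combination (b * Real.cos x + ω * Real.sin x) * hsinWc
      + (ω * Real.cos x - b * Real.sin x) * hcosWc + Real.sin x * hω2
  set g1 : ℝ → ℝ := fun t => -(c * (Real.exp (-(b * |t|)) * Real.sin (ω * t))) with hg1
  set g2 : ℝ → ℝ := fun t =>
    -(c * (Real.exp (-(b * |t|)) * (ω * Real.cos (ω * t) - b * Real.sin (ω * |t|)))) with hg2
  have hηc : Continuous η := by
    have : Continuous fun τ : ℝ => Real.exp (-(b * |τ|)) * Real.sin (W - ω * |τ|) := by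
      fun_prop
    exact this.congr fun τ => (hη τ).symm
  have hg1c : Continuous g1 := by rw [hg1]; fun_prop
  have hg2c : Continuous g2 := by rw [hg2]; fun_prop
  -- first derivative
  have A : ∀ τ : ℝ, HasDerivAt η (g1 τ) τ := by
    have Ane : ∀ τ : ℝ, τ ≠ 0 → HasDerivAt η (g1 τ) τ := by
      intro τ hτ
      rcases hτ.lt_or_gt with hneg | hpos
      · have hf : HasDerivAt (fun t : ℝ => Real.exp (b * t) * Real.sin (W + ω * t))
            (Real.exp (b * τ) * b * Real.sin (W + ω * τ)
              + Real.exp (b * τ) * (Real.cos (W + ω * τ) * ω)) τ := by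
          have h1 : HasDerivAt (fun t : ℝ => b * t) b τ := by
            simpa using (hasDerivAt_id τ).const_mul b
          have h2 : HasDerivAt (fun t : ℝ => W + ω * t) ω τ := by
            simpa using ((hasDerivAt_id τ).const_mul ω).const_add W
          exact (h1.exp.mul h2.sin).congr_deriv (by ring)
        have hev : η =ᶠ[nhds τ] fun t : ℝ => Real.exp (b * t) * Real.sin (W + ω * t) := by
          filter_upwards [eventually_lt_nhds hneg] with t ht
          rw [hη, abs_of_neg ht]
          ring_nf
        have := hf.congr_of_eventuallyEq hev
        refine this.congr_deriv (Eq.symm ?_)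
        rw [hg1]
        simp only [abs_of_neg hneg, mul_neg, neg_neg]
        have hk := key (-(ω * τ))
        simp only [sub_neg_eq_add, Real.sin_neg] at hk
        linear_combination (-(Real.exp (b * τ))) * hk
      · have hf : HasDerivAt (fun t : ℝ => Real.exp (-(b * t)) * Real.sin (W - ω * t))
            (Real.exp (-(b * τ)) * (-b) * Real.sin (W - ω * τ)
              + Real.exp (-(b * τ)) * (Real.cos (W - ω * τ) * (-ω))) τ := by
          have h1 : HasDerivAt (fun t : ℝ => -(b * t)) (-b) τ := by
            exact ((hasDerivAt_id τ).const_mul b).neg.congr_deriv (by simp)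
          have h2 : HasDerivAt (fun t : ℝ => W - ω * t) (-ω) τ := by
            simpa using ((hasDerivAt_id τ).const_mul ω).const_sub W
          exact (h1.exp.mul h2.sin).congr_deriv (by ring)
        have hev : η =ᶠ[nhds τ] fun t : ℝ => Real.exp (-(b * t)) * Real.sin (W - ω * t) := by
          filter_upwards [eventually_gt_nhds hpos] with t ht
          rw [hη, abs_of_pos ht]
        have := hf.congr_of_eventuallyEq hev
        refine this.congr_deriv (Eq.symm ?_)
        rw [hg1]
        simp only [abs_of_pos hpos]
        linear_combination Real.exp (-(b * τ)) * key (ω * τ)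
    intro τ
    rcases eq_or_ne τ 0 with rfl | hτ
    · exact hasDerivAt_of_hasDerivAt_of_ne (fun y hy => Ane y hy) hηc.continuousAt
        hg1c.continuousAt
    · exact Ane τ hτ
  -- second derivative
  have B : ∀ τ : ℝ, HasDerivAt g1 (g2 τ) τ := by
    have Bne : ∀ τ : ℝ, τ ≠ 0 → HasDerivAt g1 (g2 τ) τ := by
      intro τ hτ
      rcases hτ.lt_or_gt with hneg | hpos
      · have hf : HasDerivAt (fun t : ℝ => -(c * (Real.exp (b * t) * Real.sin (ω * t))))
            (-(c * (Real.exp (b * τ) * b * Real.sin (ω * τ)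
              + Real.exp (b * τ) * (Real.cos (ω * τ) * ω)))) τ := by
          have h1 : HasDerivAt (fun t : ℝ => b * t) b τ := by
            simpa using (hasDerivAt_id τ).const_mul b
          have h2 : HasDerivAt (fun t : ℝ => ω * t) ω τ := by
            simpa using (hasDerivAt_id τ).const_mul ω
          exact ((h1.exp.mul h2.sin).const_mul c).neg
        have hev : g1 =ᶠ[nhds τ]
            fun t : ℝ => -(c * (Real.exp (b * t) * Real.sin (ω * t))) := by
          filter_upwards [eventually_lt_nhds hneg] with t ht
          rw [hg1]
          simp [abs_of_neg ht]
        have := hf.congr_of_eventuallyEq hev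
        refine this.congr_deriv (Eq.symm ?_)
        rw [hg2]
        simp only [abs_of_neg hneg, mul_neg, neg_neg, Real.sin_neg]
        ring
      · have hf : HasDerivAt (fun t : ℝ => -(c * (Real.exp (-(b * t)) * Real.sin (ω * t))))
            (-(c * (Real.exp (-(b * τ)) * (-b) * Real.sin (ω * τ)
              + Real.exp (-(b * τ)) * (Real.cos (ω * τ) * ω)))) τ := by
          have h1 : HasDerivAt (fun t : ℝ => -(b * t)) (-b) τ := by
            exact ((hasDerivAt_id τ).const_mul b).neg.congr_deriv (by simp)
          have h2 : HasDerivAt (fun t : ℝ => ω * t) ω τ := by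
            simpa using (hasDerivAt_id τ).const_mul ω
          exact ((h1.exp.mul h2.sin).const_mul c).neg
        have hev : g1 =ᶠ[nhds τ]
            fun t : ℝ => -(c * (Real.exp (-(b * t)) * Real.sin (ω * t))) := by
          filter_upwards [eventually_gt_nhds hpos] with t ht
          rw [hg1]
          simp [abs_of_pos ht]
        have := hf.congr_of_eventuallyEq hev
        refine this.congr_deriv (Eq.symm ?_)
        rw [hg2]
        simp only [abs_of_pos hpos]
        ring
    intro τ
    rcases eq_or_ne τ 0 with rfl | hτ
    · exact hasDerivAt_of_hasDerivAt_of_ne (fun y hy => Bne y hy) hg1c.continuousAt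
        hg2c.continuousAt
    · exact Bne τ hτ
  have hderiv : deriv η = g1 := funext fun τ => (A τ).deriv
  have hderiv2 : deriv g1 = g2 := funext fun τ => (B τ).deriv
  refine ⟨?_, ?_, ?_, ?_, ?_⟩
  · rw [show (2 : WithTop ℕ∞) = 1 + 1 from rfl, contDiff_succ_iff_deriv]
    refine ⟨fun τ => (A τ).differentiableAt, by simp, ?_⟩
    rw [hderiv, contDiff_one_iff_deriv]
    exact ⟨fun τ => (B τ).differentiableAt, hderiv2 ▸ hg2c⟩
  · intro τ hτ
    have hτ' : τ ≠ 0 := hτ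
    rcases hτ'.lt_or_gt with hneg | hpos
    · have hs : ContDiff ℝ ((⊤ : ℕ∞) : WithTop ℕ∞)
          (fun t : ℝ => Real.exp (b * t) * Real.sin (W + ω * t)) :=
        (Real.contDiff_exp.comp (contDiff_const.mul contDiff_id)).mul
          (Real.contDiff_sin.comp (contDiff_const.add (contDiff_const.mul contDiff_id)))
      refine (hs.contDiffAt.congr_of_eventuallyEq ?_).contDiffWithinAt
      filter_upwards [eventually_lt_nhds hneg] with t ht
      rw [hη, abs_of_neg ht]
      ring_nf
    · have hs : ContDiff ℝ ((⊤ : ℕ∞) : WithTop ℕ∞)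
          (fun t : ℝ => Real.exp (-(b * t)) * Real.sin (W - ω * t)) :=
        (Real.contDiff_exp.comp (contDiff_const.mul contDiff_id).neg).mul
          (Real.contDiff_sin.comp (contDiff_const.sub (contDiff_const.mul contDiff_id)))
      refine (hs.contDiffAt.congr_of_eventuallyEq ?_).contDiffWithinAt
      filter_upwards [eventually_gt_nhds hpos] with t ht
      rw [hη, abs_of_pos ht]
  · rw [hη]; simp [hsinW]
  · rw [hderiv, hg1]; simp
  · rw [hderiv, hderiv2, hg2]; simp
end

section
/- Let b, c be real numbers with 0 < b < c, set ω := √(c² − b²), let W₊ := W₊(b,c), and define η(τ) := e^{−b|τ|}·sin(W₊ − ω·|τ|) for τ ∈ ℝ. Then the one-sided limits of the third derivative of η at 0 exist and satisfy lim_{τ → 0⁻} η'''(τ) = −2b·c·ω < 0 < 2b·c·ω = lim_{τ → 0⁺} η'''(τ); in particular, η is not three times differentiable at 0. -/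
open Real Filter
open Topology

noncomputable def Efun (W a w p q : ℝ) : ℝ → ℝ :=
  fun τ => Real.exp (a * τ) * (p * Real.sin (W + w * τ) + q * Real.cos (W + w * τ))

lemma Efun_hasDerivAt (W a w p q x : ℝ) :
    HasDerivAt (Efun W a w p q) (Efun W a w (a * p - w * q) (a * q + w * p) x) x := by
  have h1 : HasDerivAt (fun τ : ℝ => a * τ) a x := by
    simpa using (hasDerivAt_id x).const_mul a
  have h2 : HasDerivAt (fun τ : ℝ => W + w * τ) w x := by
    simpa using ((hasDerivAt_id x).const_mul w).const_add W
  have h := (h1.exp).mul (((h2.sin).const_mul p).add ((h2.cos).const_mul q))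
  exact h.congr_deriv (by simp only [Pi.add_apply]; unfold Efun; ring)

lemma Efun_deriv (W a w p q : ℝ) :
    deriv (Efun W a w p q) = Efun W a w (a * p - w * q) (a * q + w * p) :=
  funext fun x => (Efun_hasDerivAt W a w p q x).deriv

lemma Efun_continuous (W a w p q : ℝ) : Continuous (Efun W a w p q) := by
  unfold Efun; fun_prop

lemma deriv_eqOn_open {f g : ℝ → ℝ} {s : Set ℝ} (hs : IsOpen s) (h : Set.EqOn f g s) :
    Set.EqOn (deriv f) (deriv g) s := fun x hx =>
  Filter.EventuallyEq.deriv_eq (Filter.eventuallyEq_of_mem (hs.mem_nhds hx) h)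

/-- The Carleman weight profile `η` fails to be `C³` at `0`: the one-sided limits
of `η'` at `0` are `-2bcω` (from the left) and `2bcω` (from the right), which
differ; in particular `η'` is not differentiable at `0`. -/
theorem eta_third_derivative_jump
    (b c W : ℝ) (hb : 0 < b) (hbc : b < c)
    (hW : W ∈ Set.Ico (π / 2) π) (hcosW : Real.cos W = -(b / c))
    (ω : ℝ) (hω : ω = Real.sqrt (c ^ 2 - b ^ 2))
    (η : ℝ → ℝ)
    (hη : ∀ τ : ℝ, η τ = Real.exp (-(b * |τ|)) * Real.sin (W - ω * |τ|)) :
    Tendsto (deriv (deriv (deriv η))) (nhdsWithin 0 (Set.Iio 0))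
        (nhds (-(2 * b * c * ω))) ∧
      Tendsto (deriv (deriv (deriv η))) (nhdsWithin 0 (Set.Ioi 0))
        (nhds (2 * b * c * ω)) ∧
      0 < 2 * b * c * ω ∧
      ¬ DifferentiableAt ℝ (deriv (deriv η)) 0 := by
  have hc : 0 < c := hb.trans hbc
  have hc2b2 : (0:ℝ) < c ^ 2 - b ^ 2 := by nlinarith
  have hω2 : ω ^ 2 = c ^ 2 - b ^ 2 := by rw [hω]; exact Real.sq_sqrt hc2b2.le
  have hωpos : 0 < ω := by rw [hω]; exact Real.sqrt_pos.mpr hc2b2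
  have hpos : 0 < 2 * b * c * ω := by positivity
  have hsinW : Real.sin W = ω / c := by
    have h0W : 0 ≤ W := le_trans (by positivity) hW.1
    rw [Real.sin_eq_sqrt_one_sub_cos_sq h0W hW.2.le, hcosW]
    rw [show (1 : ℝ) - (-(b / c)) ^ 2 = (c ^ 2 - b ^ 2) / c ^ 2 by field_simp]
    rw [Real.sqrt_div hc2b2.le, ← hω, Real.sqrt_sq hc.le]
  -- equality of η with the Efun profiles on each side
  have hrt : Set.EqOn η (Efun W (-b) (-ω) 1 0) (Set.Ioi 0) := by
    intro τ hτ
    rw [hη]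
    unfold Efun
    rw [abs_of_pos hτ]
    ring_nf
  have hlt : Set.EqOn η (Efun W b ω 1 0) (Set.Iio 0) := by
    intro τ hτ
    rw [hη]
    unfold Efun
    rw [abs_of_neg hτ]
    ring_nf
  -- derivatives on the right
  have hrt1 : Set.EqOn (deriv η) (Efun W (-b) (-ω) (-b) (-ω)) (Set.Ioi 0) := by
    have := deriv_eqOn_open isOpen_Ioi hrt
    rw [Efun_deriv] at this
    simpa using this
  have hrt2 : Set.EqOn (deriv (deriv η)) (Efun W (-b) (-ω) (b^2 - ω^2) (2*b*ω)) (Set.Ioi 0) := by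
    have := deriv_eqOn_open isOpen_Ioi hrt1
    rw [Efun_deriv,
      show (-b) * (-b) - (-ω) * (-ω) = b^2 - ω^2 from by ring,
      show (-b) * (-ω) + (-ω) * (-b) = 2*b*ω from by ring] at this
    exact this
  have hrt3 : Set.EqOn (deriv (deriv (deriv η)))
      (Efun W (-b) (-ω) (3*b*ω^2 - b^3) (ω^3 - 3*b^2*ω)) (Set.Ioi 0) := by
    have := deriv_eqOn_open isOpen_Ioi hrt2
    rw [Efun_deriv,
      show (-b) * (b^2 - ω^2) - (-ω) * (2*b*ω) = 3*b*ω^2 - b^3 from by ring,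
      show (-b) * (2*b*ω) + (-ω) * (b^2 - ω^2) = ω^3 - 3*b^2*ω from by ring] at this
    exact this
  -- derivatives on the left
  have hlt1 : Set.EqOn (deriv η) (Efun W b ω b ω) (Set.Iio 0) := by
    have := deriv_eqOn_open isOpen_Iio hlt
    rw [Efun_deriv] at this
    simpa using this
  have hlt2 : Set.EqOn (deriv (deriv η)) (Efun W b ω (b^2 - ω^2) (2*b*ω)) (Set.Iio 0) := by
    have := deriv_eqOn_open isOpen_Iio hlt1
    rw [Efun_deriv,
      show b * b - ω * ω = b^2 - ω^2 from by ring,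
      show b * ω + ω * b = 2*b*ω from by ring] at this
    exact this
  have hlt3 : Set.EqOn (deriv (deriv (deriv η)))
      (Efun W b ω (b^3 - 3*b*ω^2) (3*b^2*ω - ω^3)) (Set.Iio 0) := by
    have := deriv_eqOn_open isOpen_Iio hlt2
    rw [Efun_deriv,
      show b * (b^2 - ω^2) - ω * (2*b*ω) = b^3 - 3*b*ω^2 from by ring,
      show b * (2*b*ω) + ω * (b^2 - ω^2) = 3*b^2*ω - ω^3 from by ring] at this
    exact this
  -- values at 0
  have hval_r : Efun W (-b) (-ω) (3*b*ω^2 - b^3) (ω^3 - 3*b^2*ω) 0 = 2 * b * c * ω := by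
    unfold Efun
    simp only [mul_zero, Real.exp_zero, add_zero, one_mul, hsinW, hcosW]
    field_simp
    linear_combination 2 * hω2
  have hval_l : Efun W b ω (b^3 - 3*b*ω^2) (3*b^2*ω - ω^3) 0 = -(2 * b * c * ω) := by
    unfold Efun
    simp only [mul_zero, Real.exp_zero, add_zero, one_mul, hsinW, hcosW]
    field_simp
    linear_combination (-2) * hω2
  -- the two one-sided limits
  have hT_r : Tendsto (deriv (deriv (deriv η))) (𝓝[>] (0:ℝ)) (𝓝 (2 * b * c * ω)) := by
    have h1 : Tendsto (Efun W (-b) (-ω) (3*b*ω^2 - b^3) (ω^3 - 3*b^2*ω)) (𝓝[>] (0:ℝ))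
        (𝓝 (2 * b * c * ω)) := by
      rw [← hval_r]
      exact ((Efun_continuous _ _ _ _ _).tendsto 0).mono_left nhdsWithin_le_nhds
    exact h1.congr' (Filter.eventuallyEq_of_mem self_mem_nhdsWithin fun x hx => (hrt3 hx).symm)
  have hT_l : Tendsto (deriv (deriv (deriv η))) (𝓝[<] (0:ℝ)) (𝓝 (-(2 * b * c * ω))) := by
    have h1 : Tendsto (Efun W b ω (b^3 - 3*b*ω^2) (3*b^2*ω - ω^3)) (𝓝[<] (0:ℝ))
        (𝓝 (-(2 * b * c * ω))) := by
      rw [← hval_l]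
      exact ((Efun_continuous _ _ _ _ _).tendsto 0).mono_left nhdsWithin_le_nhds
    exact h1.congr' (Filter.eventuallyEq_of_mem self_mem_nhdsWithin fun x hx => (hlt3 hx).symm)
  refine ⟨hT_l, hT_r, hpos, ?_⟩
  -- non-differentiability
  intro hdiff
  have hdiff_r : DifferentiableOn ℝ (deriv (deriv η)) (Set.Ioi 0) := by
    intro x hx
    have hE := Efun_hasDerivAt W (-b) (-ω) (b^2 - ω^2) (2*b*ω) x
    have heq : deriv (deriv η) =ᶠ[𝓝 x] Efun W (-b) (-ω) (b^2 - ω^2) (2*b*ω) :=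
      Filter.eventuallyEq_of_mem (isOpen_Ioi.mem_nhds hx) hrt2
    exact ((hE.congr_of_eventuallyEq heq).differentiableAt).differentiableWithinAt
  have hdiff_l : DifferentiableOn ℝ (deriv (deriv η)) (Set.Iio 0) := by
    intro x hx
    have hE := Efun_hasDerivAt W b ω (b^2 - ω^2) (2*b*ω) x
    have heq : deriv (deriv η) =ᶠ[𝓝 x] Efun W b ω (b^2 - ω^2) (2*b*ω) :=
      Filter.eventuallyEq_of_mem (isOpen_Iio.mem_nhds hx) hlt2
    exact ((hE.congr_of_eventuallyEq heq).differentiableAt).differentiableWithinAt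
  have hcont : ContinuousAt (deriv (deriv η)) 0 := hdiff.continuousAt
  have hR : HasDerivWithinAt (deriv (deriv η)) (2 * b * c * ω) (Set.Ici 0) 0 :=
    hasDerivWithinAt_Ici_of_tendsto_deriv hdiff_r hcont.continuousWithinAt
      self_mem_nhdsWithin hT_r
  have hL : HasDerivWithinAt (deriv (deriv η)) (-(2 * b * c * ω)) (Set.Iic 0) 0 :=
    hasDerivWithinAt_Iic_of_tendsto_deriv hdiff_l hcont.continuousWithinAt
      self_mem_nhdsWithin hT_l
  have hD := hdiff.hasDerivAt
  have e1 : (2 : ℝ) * b * c * ω = deriv (deriv (deriv η)) 0 := by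
    rw [← hR.derivWithin (uniqueDiffOn_Ici (0:ℝ) 0 Set.self_mem_Ici),
      (hD.hasDerivWithinAt).derivWithin (uniqueDiffOn_Ici (0:ℝ) 0 Set.self_mem_Ici)]
  have e2 : -((2 : ℝ) * b * c * ω) = deriv (deriv (deriv η)) 0 := by
    rw [← hL.derivWithin (uniqueDiffOn_Iic (0:ℝ) 0 Set.self_mem_Iic),
      (hD.hasDerivWithinAt).derivWithin (uniqueDiffOn_Iic (0:ℝ) 0 Set.self_mem_Iic)]
  have : (2 : ℝ) * b * c * ω = -(2 * b * c * ω) := e1.trans e2.symm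
  linarith
end

section
/- Let b, c be real numbers with 0 ≤ b < c, set ω := √(c² − b²), let W₊ := W₊(b,c) and T := W₊/ω, let a > 0, and define f(τ) := (a/ω)·e^{b·τ}·sin(ω·τ). Then f satisfies f''(τ) − 2b·f'(τ) + c²·f(τ) = 0 for all τ ∈ ℝ, f(0) = 0, f'(0) = a, f(τ) > 0 for all τ ∈ (0, T], f'(τ) > 0 for all τ ∈ [0, T), and f'(T) = 0. -/
open Real

/-- The explicit increasing-phase comparison solution `f(τ) = (a/ω)·e^{bτ}·sin(ωτ)`
of the damped oscillator `f'' - 2b·f' + c²·f = 0` with data `f(0) = 0`, `f'(0) = a`: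
it is positive on `(0, T]`, has positive derivative on `[0, T)`, and `f'(T) = 0`,
where `ω = √(c² - b²)`, `W = W₊(b,c)` is the unique angle in `[π/2, π)` with
`cos W = -b/c`, and `T = W/ω`. -/
theorem comparison_solution_increasing_phase
    (b c W : ℝ) (hb : 0 ≤ b) (hbc : b < c)
    (hW : W ∈ Set.Ico (π / 2) π) (hcosW : Real.cos W = -(b / c))
    (ω : ℝ) (hω : ω = Real.sqrt (c ^ 2 - b ^ 2))
    (T : ℝ) (hT : T = W / ω)
    (a : ℝ) (ha : 0 < a)
    (f : ℝ → ℝ)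
    (hf : ∀ τ : ℝ, f τ = (a / ω) * Real.exp (b * τ) * Real.sin (ω * τ)) :
    (∀ τ : ℝ, deriv (deriv f) τ - 2 * b * deriv f τ + c ^ 2 * f τ = 0) ∧
      f 0 = 0 ∧ deriv f 0 = a ∧
      (∀ τ ∈ Set.Ioc 0 T, 0 < f τ) ∧
      (∀ τ ∈ Set.Ico 0 T, 0 < deriv f τ) ∧
      deriv f T = 0 := by
  have hc : 0 < c := lt_of_le_of_lt hb hbc
  have hcb : 0 < c ^ 2 - b ^ 2 := by nlinarith
  have hω0 : 0 < ω := hω ▸ Real.sqrt_pos.mpr hcb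
  have hω2 : ω ^ 2 = c ^ 2 - b ^ 2 := by
    rw [hω, Real.sq_sqrt hcb.le]
  have hsinW : Real.sin W = ω / c := by
    have h1 : Real.sin W = Real.sqrt (1 - Real.cos W ^ 2) := by
      rw [Real.sin_eq_sqrt_one_sub_cos_sq]
      · linarith [pi_pos, hW.1]
      · exact hW.2.le
    rw [h1, hcosW]
    rw [show 1 - (-(b/c)) ^ 2 = (c^2 - b^2) / c^2 by field_simp]
    rw [Real.sqrt_div hcb.le, Real.sqrt_sq hc.le, ← hω]
  -- derivative formula
  have hd1 : ∀ τ : ℝ, HasDerivAt f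
      ((a / ω) * Real.exp (b * τ) * (b * Real.sin (ω * τ) + ω * Real.cos (ω * τ))) τ := by
    intro τ
    have hfe : f = fun τ => (a / ω) * Real.exp (b * τ) * Real.sin (ω * τ) := funext hf
    rw [hfe]
    have h1 : HasDerivAt (fun τ : ℝ => Real.exp (b * τ)) (b * Real.exp (b * τ)) τ := by
      have := ((hasDerivAt_id τ).const_mul b).exp
      simpa [mul_comm] using this
    have h2 : HasDerivAt (fun τ : ℝ => Real.sin (ω * τ)) (ω * Real.cos (ω * τ)) τ := by
      have := ((hasDerivAt_id τ).const_mul ω).sin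
      simpa [mul_comm] using this
    have := ((h1.fun_mul h2).const_mul (a / ω))
    simp only [← mul_assoc] at this
    exact this.congr_deriv (by ring)
  have hderiv : deriv f = fun τ => (a / ω) * Real.exp (b * τ) * (b * Real.sin (ω * τ) + ω * Real.cos (ω * τ)) := by
    funext τ; exact (hd1 τ).deriv
  have hd2 : ∀ τ : ℝ, HasDerivAt (deriv f)
      ((a / ω) * Real.exp (b * τ) * ((b^2 - ω^2) * Real.sin (ω * τ) + 2 * b * ω * Real.cos (ω * τ))) τ := by
    intro τ
    rw [hderiv]
    have h1 : HasDerivAt (fun τ : ℝ => Real.exp (b * τ)) (b * Real.exp (b * τ)) τ := by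
      have := ((hasDerivAt_id τ).const_mul b).exp
      simpa [mul_comm] using this
    have h2 : HasDerivAt (fun τ : ℝ => b * Real.sin (ω * τ) + ω * Real.cos (ω * τ))
        (b * (ω * Real.cos (ω * τ)) + ω * (-(ω * Real.sin (ω * τ)))) τ := by
      have hs := (((hasDerivAt_id τ).const_mul ω).sin).const_mul b
      have hc' := (((hasDerivAt_id τ).const_mul ω).cos).const_mul ω
      have := hs.fun_add hc'
      exact this.congr_deriv (by simp [mul_comm])
    have := ((h1.fun_mul h2).const_mul (a / ω))
    simp only [← mul_assoc] at this
    exact this.congr_deriv (by ring)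
  have hderiv2 : ∀ τ, deriv (deriv f) τ = (a / ω) * Real.exp (b * τ) * ((b^2 - ω^2) * Real.sin (ω * τ) + 2 * b * ω * Real.cos (ω * τ)) := by
    intro τ; exact (hd2 τ).deriv
  -- key: b sin θ + ω cos θ = c sin (W - ω τ)
  have hkey : ∀ τ : ℝ, b * Real.sin (ω * τ) + ω * Real.cos (ω * τ) = c * Real.sin (W - ω * τ) := by
    intro τ
    rw [Real.sin_sub, hsinW, hcosW]
    field_simp
    ring
  refine ⟨?_, ?_, ?_, ?_, ?_, ?_⟩
  · intro τ
    rw [hderiv2, hderiv, hf]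
    show (a / ω) * Real.exp (b * τ) * ((b^2 - ω^2) * Real.sin (ω * τ) + 2 * b * ω * Real.cos (ω * τ))
      - 2 * b * ((a / ω) * Real.exp (b * τ) * (b * Real.sin (ω * τ) + ω * Real.cos (ω * τ)))
      + c ^ 2 * ((a / ω) * Real.exp (b * τ) * Real.sin (ω * τ)) = 0
    rw [show c ^ 2 = ω ^ 2 + b ^ 2 from by linarith]
    ring
  · simp [hf]
  · rw [hderiv]; simp; field_simp
  · intro τ hτ
    rw [hf]
    have h1 : 0 < ω * τ := mul_pos hω0 hτ.1
    have h2 : ω * τ ≤ W := by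
      rw [hT] at hτ
      calc ω * τ ≤ ω * (W / ω) := by nlinarith [hτ.2]
        _ = W := by field_simp
    have hs : 0 < Real.sin (ω * τ) :=
      Real.sin_pos_of_pos_of_lt_pi h1 (lt_of_le_of_lt h2 hW.2)
    positivity
  · intro τ hτ
    rw [hderiv]
    have h1 : 0 ≤ ω * τ := mul_nonneg hω0.le hτ.1
    have h2 : ω * τ < W := by
      rw [hT] at hτ
      calc ω * τ < ω * (W / ω) := by nlinarith [hτ.2]
        _ = W := by field_simp
    have hs : 0 < Real.sin (W - ω * τ) :=
      Real.sin_pos_of_pos_of_lt_pi (by linarith) (by linarith [hW.2, pi_pos])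
    show 0 < (a / ω) * Real.exp (b * τ) * (b * Real.sin (ω * τ) + ω * Real.cos (ω * τ))
    rw [hkey τ]
    positivity
  · rw [hderiv]
    show (a / ω) * Real.exp (b * T) * (b * Real.sin (ω * T) + ω * Real.cos (ω * T)) = 0
    rw [hkey T]
    have : ω * T = W := by rw [hT]; field_simp
    rw [this]
    simp
end

section
/- Let b, c be real numbers with 0 ≤ b < c, set ω := √(c² − b²), let W₊ := W₊(b,c) and T₊ := W₊/ω. Let T > 0 and let ρ : [0, T] → ℝ be twice continuously differentiable with ρ(0) = 0 and ρ'(0) > 0, such that ρ(τ) > 0 and ρ'(τ) > 0 for all τ ∈ (0, T), and ρ''(τ) − 2b·ρ'(τ) + c²·ρ(τ) ≤ 0 for all τ ∈ [0, T]. Then T ≤ T₊, and ρ(τ) ≤ (ρ'(0)/ω)·e^{b·τ}·sin(ω·τ) for all τ ∈ (0, T]. -/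
open Real

private lemma hasDerivAt_uu (b ω t : ℝ) :
    HasDerivAt (fun s => Real.exp (b*s) * Real.sin (ω*s))
      (Real.exp (b*t) * (b * Real.sin (ω*t) + ω * Real.cos (ω*t))) t := by
  have h1 : HasDerivAt (fun s : ℝ => Real.exp (b*s)) (Real.exp (b*t) * b) t := by
    simpa using ((hasDerivAt_id t).const_mul b).exp
  have h2 : HasDerivAt (fun s : ℝ => Real.sin (ω*s)) (Real.cos (ω*t) * ω) t := by
    simpa using ((hasDerivAt_id t).const_mul ω).sin
  have := h1.fun_mul h2
  refine this.congr_deriv (Eq.symm ?_)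
  ring

private lemma hasDerivAt_uu1 (b ω t : ℝ) :
    HasDerivAt (fun s => Real.exp (b*s) * (b * Real.sin (ω*s) + ω * Real.cos (ω*s)))
      (Real.exp (b*t) * ((b^2-ω^2) * Real.sin (ω*t) + 2*b*ω * Real.cos (ω*t))) t := by
  have h1 : HasDerivAt (fun s : ℝ => Real.exp (b*s)) (Real.exp (b*t) * b) t := by
    simpa using ((hasDerivAt_id t).const_mul b).exp
  have h2 : HasDerivAt (fun s : ℝ => b * Real.sin (ω*s) + ω * Real.cos (ω*s))
      (b * (Real.cos (ω*t) * ω) + ω * (-Real.sin (ω*t) * ω)) t := by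
    simpa using ((((hasDerivAt_id t).const_mul ω).sin).const_mul b).fun_add
      ((((hasDerivAt_id t).const_mul ω).cos).const_mul ω)
  have := h1.fun_mul h2
  refine this.congr_deriv (Eq.symm ?_)
  ring

set_option maxHeartbeats 2000000 in
/-- Upper Sturm comparison, increasing phase: a `C²` function `ρ` on `[0, T]` with
`ρ(0) = 0`, `ρ'(0) > 0`, `ρ > 0` and `ρ' > 0` on `(0, T)`, and
`ρ'' - 2b·ρ' + c²·ρ ≤ 0` on `[0, T]` satisfies `T ≤ T₊ = W₊(b,c)/ω` and is dominated
by the explicit oscillator solution `(ρ'(0)/ω)·e^{bτ}·sin(ωτ)` on `(0, T]`. -/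
theorem sturm_comparison_upper_increasing
    (b c W : ℝ) (hb : 0 ≤ b) (hbc : b < c)
    (hW : W ∈ Set.Ico (π / 2) π) (hcosW : Real.cos W = -(b / c))
    (ω : ℝ) (hω : ω = Real.sqrt (c ^ 2 - b ^ 2))
    (Tp : ℝ) (hTp : Tp = W / ω)
    (T : ℝ) (hT : 0 < T)
    (ρ ρ' ρ'' : ℝ → ℝ)
    (hd1 : ∀ t ∈ Set.Icc 0 T, HasDerivWithinAt ρ (ρ' t) (Set.Icc 0 T) t)
    (hd2 : ∀ t ∈ Set.Icc 0 T, HasDerivWithinAt ρ' (ρ'' t) (Set.Icc 0 T) t)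
    (hcont : ContinuousOn ρ'' (Set.Icc 0 T))
    (h0 : ρ 0 = 0) (h0' : 0 < ρ' 0)
    (hpos : ∀ τ ∈ Set.Ioo 0 T, 0 < ρ τ)
    (hpos' : ∀ τ ∈ Set.Ioo 0 T, 0 < ρ' τ)
    (hineq : ∀ τ ∈ Set.Icc 0 T, ρ'' τ - 2 * b * ρ' τ + c ^ 2 * ρ τ ≤ 0) :
    T ≤ Tp ∧
      ∀ τ ∈ Set.Ioc 0 T,
        ρ τ ≤ (ρ' 0 / ω) * Real.exp (b * τ) * Real.sin (ω * τ) := by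
  have hc : 0 < c := lt_of_le_of_lt hb hbc
  have hb2c2 : b^2 < c^2 := by nlinarith
  have hω0 : 0 < ω := by rw [hω]; exact Real.sqrt_pos.mpr (by linarith)
  have hω2 : ω^2 = c^2 - b^2 := by rw [hω]; exact Real.sq_sqrt (by linarith)
  have hode : b^2 + ω^2 = c^2 := by linarith
  have hWlt : W < π := hW.2
  have hWpos : 0 < W := lt_of_lt_of_le (by positivity) hW.1
  have hsinW : Real.sin W = ω / c := by
    have h2 : 0 ≤ Real.sin W :=
      Real.sin_nonneg_of_nonneg_of_le_pi (le_of_lt hWpos) (le_of_lt hWlt)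
    have h3 := Real.sin_sq_add_cos_sq W
    rw [hcosW] at h3
    have h4 : Real.sin W ^ 2 = (ω/c)^2 := by
      field_simp at h3 ⊢
      nlinarith
    have h5 : 0 ≤ ω / c := by positivity
    nlinarith
  have hTp0 : 0 < Tp := by rw [hTp]; exact div_pos hWpos hω0
  have hωTp : ω * Tp = W := by
    rw [hTp]; field_simp
  -- the comparison solution and its derivatives
  set u : ℝ → ℝ := fun s => Real.exp (b*s) * Real.sin (ω*s) with hu_def
  set u1 : ℝ → ℝ := fun s => Real.exp (b*s) * (b * Real.sin (ω*s) + ω * Real.cos (ω*s)) with hu1_def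
  set u2 : ℝ → ℝ := fun s => Real.exp (b*s) * ((b^2-ω^2) * Real.sin (ω*s) + 2*b*ω * Real.cos (ω*s)) with hu2_def
  have hud : ∀ t, HasDerivAt u (u1 t) t := fun t => hasDerivAt_uu b ω t
  have hu1d : ∀ t, HasDerivAt u1 (u2 t) t := fun t => hasDerivAt_uu1 b ω t
  have huode : ∀ t, u2 t - 2*b*u1 t + c^2 * u t = 0 := by
    intro t
    simp only [hu_def, hu1_def, hu2_def]
    rw [← hode]; ring
  set S : ℝ := min T Tp with hS_def
  have hS_T : S ≤ T := min_le_left _ _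
  have hS_Tp : S ≤ Tp := min_le_right _ _
  have hS0 : 0 < S := lt_min hT hTp0
  -- continuity of ρ and ρ'
  have hρc : ContinuousOn ρ (Set.Icc 0 T) := fun x hx => (hd1 x hx).continuousWithinAt
  have hρ'c : ContinuousOn ρ' (Set.Icc 0 T) := fun x hx => (hd2 x hx).continuousWithinAt
  -- the weighted Wronskian
  set G : ℝ → ℝ := fun s => Real.exp (-(2*b)*s) * (u s * ρ' s - u1 s * ρ s) with hG_def
  have hG0 : G 0 = 0 := by
    simp [hG_def, hu_def, hu1_def, h0]
  have hGanti : AntitoneOn G (Set.Icc 0 S) := by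
    have hconv : Convex ℝ (Set.Icc (0:ℝ) S) := convex_Icc 0 S
    have hsub : Set.Icc (0:ℝ) S ⊆ Set.Icc 0 T := Set.Icc_subset_Icc le_rfl hS_T
    have hGc : ContinuousOn G (Set.Icc 0 S) := by
      apply ContinuousOn.mul
      · exact ((Real.continuous_exp.comp (continuous_const.mul continuous_id)).continuousOn)
      · have huc : Continuous u := continuous_iff_continuousAt.mpr fun x => (hud x).continuousAt
        have hu1c : Continuous u1 := continuous_iff_continuousAt.mpr fun x => (hu1d x).continuousAt
        exact ((huc.continuousOn.mul (hρ'c.mono hsub)).sub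
          (hu1c.continuousOn.mul (hρc.mono hsub)))
    have hGderiv : ∀ x ∈ Set.Ioo 0 S, HasDerivAt G
        (Real.exp (-(2*b)*x) * (u x * (ρ'' x - 2*b*ρ' x + c^2*ρ x))) x := by
      intro x hx
      have hxT : x ∈ Set.Ioo 0 T := ⟨hx.1, lt_of_lt_of_le hx.2 hS_T⟩
      have hmem : Set.Icc (0:ℝ) T ∈ nhds x :=
        Icc_mem_nhds (by linarith [hxT.1]) (by linarith [hxT.2])
      have hρd : HasDerivAt ρ (ρ' x) x :=
        (hd1 x ⟨le_of_lt hxT.1, le_of_lt hxT.2⟩).hasDerivAt hmem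
      have hρ'd : HasDerivAt ρ' (ρ'' x) x :=
        (hd2 x ⟨le_of_lt hxT.1, le_of_lt hxT.2⟩).hasDerivAt hmem
      have hWr : HasDerivAt (fun s => u s * ρ' s - u1 s * ρ s)
          ((u1 x * ρ' x + u x * ρ'' x) - (u2 x * ρ x + u1 x * ρ' x)) x :=
        ((hud x).mul hρ'd).sub ((hu1d x).mul hρd)
      have hexp : HasDerivAt (fun s : ℝ => Real.exp (-(2*b)*s))
          (Real.exp (-(2*b)*x) * (-(2*b))) x := by
        simpa using ((hasDerivAt_id x).const_mul (-(2*b))).exp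
      have hG' := hexp.fun_mul hWr
      refine hG'.congr_deriv (Eq.symm ?_)
      linear_combination (Real.exp (-(2*b)*x) * ρ x) * huode x
    apply antitoneOn_of_deriv_nonpos hconv hGc
    · rw [interior_Icc]
      exact fun x hx => ((hGderiv x hx).differentiableAt).differentiableWithinAt
    · rw [interior_Icc]
      intro x hx
      rw [(hGderiv x hx).deriv]
      have hxT' : x ∈ Set.Icc 0 T := ⟨le_of_lt hx.1, le_trans (le_of_lt hx.2) hS_T⟩
      have hsin : 0 ≤ Real.sin (ω*x) := by
        apply Real.sin_nonneg_of_nonneg_of_le_pi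
        · exact mul_nonneg hω0.le hx.1.le
        · have : ω * x ≤ ω * Tp := by
            apply mul_le_mul_of_nonneg_left _ (le_of_lt hω0)
            exact le_trans (le_of_lt hx.2) hS_Tp
          rw [hωTp] at this
          linarith
      have hupos : 0 ≤ u x := by
        simp only [hu_def]
        exact mul_nonneg (Real.exp_pos _).le hsin
      have := hineq x hxT'
      have he : 0 < Real.exp (-(2*b)*x) := Real.exp_pos _
      have h1 : 0 ≤ Real.exp (-(2*b)*x) * u x := mul_nonneg he.le hupos
      nlinarith [mul_nonneg h1 (neg_nonneg.mpr this)]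
  -- Wronskian is nonpositive on [0, S]
  have hWr_nonpos : ∀ x ∈ Set.Icc 0 S, u x * ρ' x - u1 x * ρ x ≤ 0 := by
    intro x hx
    have := hGanti (Set.left_mem_Icc.mpr (le_of_lt hS0)) hx hx.1
    rw [hG0] at this
    have he : 0 < Real.exp (-(2*b)*x) := Real.exp_pos _
    simp only [hG_def] at this
    by_contra h
    push_neg at h
    nlinarith [mul_pos he h]
  -- Step 1: T ≤ Tp
  have hTTp : T ≤ Tp := by
    by_contra h
    push_neg at h
    have hSTp : S = Tp := min_eq_right (le_of_lt h)
    have hTpT : Tp ∈ Set.Ioo 0 T := ⟨hTp0, h⟩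
    have hu1Tp : u1 Tp = 0 := by
      simp only [hu1_def]
      rw [hωTp, hsinW, hcosW]
      ring
    have huTp : 0 < u Tp := by
      simp only [hu_def]
      rw [hωTp, hsinW]
      exact mul_pos (Real.exp_pos _) (div_pos hω0 hc)
    have hρ'Tp : 0 < ρ' Tp := hpos' Tp hTpT
    have := hWr_nonpos Tp (by rw [hSTp]; exact Set.right_mem_Icc.mpr (le_of_lt hTp0))
    rw [hu1Tp] at this
    simp only [zero_mul, sub_zero] at this
    have hup := mul_pos huTp hρ'Tp
    linarith
  have hST : S = T := min_eq_left hTTp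
  rw [hST] at hWr_nonpos
  refine ⟨hTTp, ?_⟩
  -- Step 2: the pointwise bound
  intro τ hτ
  have hτ0 : 0 < τ := hτ.1
  have hτT : τ ≤ T := hτ.2
  -- u > 0 on (0, τ]
  have hu_pos : ∀ s ∈ Set.Ioc 0 τ, 0 < u s := by
    intro s hs
    have hωs : ω * s < π := by
      have h1 : ω * s ≤ ω * Tp := by
        apply mul_le_mul_of_nonneg_left _ (le_of_lt hω0)
        exact le_trans hs.2 (le_trans hτT hTTp)
      rw [hωTp] at h1
      linarith
    have hsp : 0 < Real.sin (ω*s) := Real.sin_pos_of_pos_of_lt_pi (mul_pos hω0 hs.1) hωs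
    simp only [hu_def]
    exact mul_pos (Real.exp_pos _) hsp
  -- the ratio ρ/u is antitone on (0, τ]
  have hsub : Set.Ioc (0:ℝ) τ ⊆ Set.Icc 0 T := fun x hx => ⟨le_of_lt hx.1, le_trans hx.2 hτT⟩
  have hratio : AntitoneOn (fun s => ρ s / u s) (Set.Ioc 0 τ) := by
    apply antitoneOn_of_deriv_nonpos (convex_Ioc 0 τ)
    · apply ContinuousOn.div (hρc.mono hsub)
      · exact Continuous.continuousOn (continuous_iff_continuousAt.mpr fun x => (hud x).continuousAt)
      · intro x hx; exact ne_of_gt (hu_pos x hx)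
    · rw [interior_Ioc]
      intro x hx
      have hxτ : x ∈ Set.Ioc 0 τ := ⟨hx.1, le_of_lt hx.2⟩
      have hmem : Set.Icc (0:ℝ) T ∈ nhds x :=
        Icc_mem_nhds hx.1 (lt_of_lt_of_le hx.2 hτT)
      have hρd : HasDerivAt ρ (ρ' x) x := (hd1 x (hsub hxτ)).hasDerivAt hmem
      exact ((hρd.div (hud x) (ne_of_gt (hu_pos x hxτ))).differentiableAt).differentiableWithinAt
    · rw [interior_Ioc]
      intro x hx
      have hxτ : x ∈ Set.Ioc 0 τ := ⟨hx.1, le_of_lt hx.2⟩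
      have hmem : Set.Icc (0:ℝ) T ∈ nhds x :=
        Icc_mem_nhds hx.1 (lt_of_lt_of_le hx.2 hτT)
      have hρd : HasDerivAt ρ (ρ' x) x := (hd1 x (hsub hxτ)).hasDerivAt hmem
      have hdd := hρd.fun_div (hud x) (ne_of_gt (hu_pos x hxτ))
      rw [hdd.deriv]
      have hWr := hWr_nonpos x (hsub hxτ)
      have hu2 : 0 < u x ^ 2 := pow_pos (hu_pos x hxτ) 2
      apply div_nonpos_of_nonpos_of_nonneg _ (le_of_lt hu2)
      nlinarith
  -- r τ ≤ r s for all s ∈ (0, τ]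
  have hrle : ∀ s ∈ Set.Ioc 0 τ, ρ τ / u τ ≤ ρ s / u s := fun s hs =>
    hratio hs (Set.right_mem_Ioc.mpr hτ0) hs.2
  -- limit of the ratio at 0⁺
  have hlim : Filter.Tendsto (fun s => ρ s / u s) (nhdsWithin 0 (Set.Ioc 0 τ)) (nhds (ρ' 0 / ω)) := by
    have hρslope : Filter.Tendsto (fun s => ρ s / s) (nhdsWithin 0 (Set.Ioc 0 τ)) (nhds (ρ' 0)) := by
      have h1 := hasDerivWithinAt_iff_tendsto_slope.mp
        (hd1 0 (Set.left_mem_Icc.mpr (le_of_lt hT)))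
      have h2 : nhdsWithin (0:ℝ) (Set.Ioc 0 τ) ≤ nhdsWithin 0 (Set.Icc 0 T \ {0}) := by
        apply nhdsWithin_mono
        intro x hx
        exact ⟨hsub hx, by simp [ne_of_gt hx.1]⟩
      have := h1.mono_left h2
      apply this.congr'
      filter_upwards [self_mem_nhdsWithin] with s hs
      simp [slope, h0, div_eq_inv_mul]
    have huslope : Filter.Tendsto (fun s => u s / s) (nhdsWithin 0 (Set.Ioc 0 τ)) (nhds ω) := by
      have h1 : HasDerivAt u ω 0 := by
        have := hud 0
        simpa [hu1_def] using this
      have h2 := hasDerivWithinAt_iff_tendsto_slope.mp (h1.hasDerivWithinAt (s := Set.Ioc 0 τ))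
      have h3 : nhdsWithin (0:ℝ) (Set.Ioc 0 τ) ≤ nhdsWithin 0 (Set.Ioc 0 τ \ {0}) := by
        apply nhdsWithin_mono
        intro x hx
        exact ⟨hx, by simp [ne_of_gt hx.1]⟩
      have := h2.mono_left h3
      apply this.congr'
      filter_upwards [self_mem_nhdsWithin] with s hs
      have hu0 : u 0 = 0 := by simp [hu_def]
      simp [slope, hu0, div_eq_inv_mul]
    have := hρslope.div huslope (ne_of_gt hω0)
    apply this.congr'
    filter_upwards [self_mem_nhdsWithin] with s hs
    have hs0 : s ≠ 0 := ne_of_gt hs.1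
    have hus : u s ≠ 0 := ne_of_gt (hu_pos s hs)
    simp only [Pi.div_apply]
    field_simp
  -- conclude r τ ≤ ρ'(0)/ω
  have hne : (nhdsWithin (0:ℝ) (Set.Ioc 0 τ)).NeBot := by
    apply mem_closure_iff_nhdsWithin_neBot.mp
    rw [closure_Ioc hτ0.ne]
    exact Set.left_mem_Icc.mpr (le_of_lt hτ0)
  have hfinal : ρ τ / u τ ≤ ρ' 0 / ω := by
    apply ge_of_tendsto hlim
    filter_upwards [self_mem_nhdsWithin] with s hs
    exact hrle s hs
  have huτ : 0 < u τ := hu_pos τ (Set.right_mem_Ioc.mpr hτ0)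
  have : ρ τ ≤ (ρ' 0 / ω) * u τ := by
    rw [div_le_iff₀ huτ] at hfinal
    linarith
  calc ρ τ ≤ (ρ' 0 / ω) * u τ := this
    _ = (ρ' 0 / ω) * Real.exp (b * τ) * Real.sin (ω * τ) := by
        simp only [hu_def]; ring
end

section
/- Let b, c be real numbers with 0 ≤ b < c, set ω := √(c² − b²), let W₋ := W₋(b,c) and T₋ := W₋/ω. Let T > 0 and let ρ : [0, T] → ℝ be twice continuously differentiable with ρ(0) = 0 and ρ'(0) > 0, such that ρ(τ) > 0 for all τ ∈ (0, T], and ρ''(τ) + 2b·ρ'(τ) + c²·ρ(τ) ≥ 0 for all τ ∈ [0, T]. Then for all τ ∈ (0, min(T, T₋)]: ρ(τ) ≥ (ρ'(0)/ω)·e^{−b·τ}·sin(ω·τ) and ρ'(τ) ≥ (ρ'(0)/ω)·e^{−b·τ}·(ω·cos(ω·τ) − b·sin(ω·τ)); in particular, ρ'(τ) > 0 for all τ ∈ (0, min(T, T₋)). -/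
open Real

/-- Lower Sturm comparison, increasing phase: a `C²` function `ρ` on `[0, T]` with
`ρ(0) = 0`, `ρ'(0) > 0`, `ρ > 0` on `(0, T]`, and `ρ'' + 2b·ρ' + c²·ρ ≥ 0` on
`[0, T]`, dominates the explicit oscillator solution `(ρ'(0)/ω)·e^{-bτ}·sin(ωτ)` up
to time `min(T, T₋)`, where `T₋ = W₋(b,c)/ω`; in particular `ρ' > 0` on
`(0, min(T, T₋))`. -/
theorem sturm_comparison_lower_increasing
    (b c W : ℝ) (hb : 0 ≤ b) (hbc : b < c)
    (hW : W ∈ Set.Ioc 0 (π / 2)) (hcosW : Real.cos W = b / c)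
    (ω : ℝ) (hω : ω = Real.sqrt (c ^ 2 - b ^ 2))
    (Tm : ℝ) (hTm : Tm = W / ω)
    (T : ℝ) (hT : 0 < T)
    (ρ ρ' ρ'' : ℝ → ℝ)
    (hd1 : ∀ t ∈ Set.Icc 0 T, HasDerivWithinAt ρ (ρ' t) (Set.Icc 0 T) t)
    (hd2 : ∀ t ∈ Set.Icc 0 T, HasDerivWithinAt ρ' (ρ'' t) (Set.Icc 0 T) t)
    (hcont : ContinuousOn ρ'' (Set.Icc 0 T))
    (h0 : ρ 0 = 0) (h0' : 0 < ρ' 0)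
    (hpos : ∀ τ ∈ Set.Ioc 0 T, 0 < ρ τ)
    (hineq : ∀ τ ∈ Set.Icc 0 T, 0 ≤ ρ'' τ + 2 * b * ρ' τ + c ^ 2 * ρ τ) :
    (∀ τ ∈ Set.Ioc 0 (min T Tm),
        (ρ' 0 / ω) * Real.exp (-(b * τ)) * Real.sin (ω * τ) ≤ ρ τ ∧
        (ρ' 0 / ω) * Real.exp (-(b * τ)) *
            (ω * Real.cos (ω * τ) - b * Real.sin (ω * τ)) ≤ ρ' τ) ∧
      ∀ τ ∈ Set.Ioo 0 (min T Tm), 0 < ρ' τ := by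
  have hc : 0 < c := lt_of_le_of_lt hb hbc
  have hcb2 : (0:ℝ) < c ^ 2 - b ^ 2 := by nlinarith
  have hωpos : 0 < ω := by rw [hω]; exact Real.sqrt_pos.mpr hcb2
  have hω2 : ω ^ 2 = c ^ 2 - b ^ 2 := by rw [hω]; exact Real.sq_sqrt hcb2.le
  have hWpos : 0 < W := hW.1
  have hWle : W ≤ π / 2 := hW.2
  have hWlepi : W ≤ π := hWle.trans (by linarith [Real.pi_pos])
  have hsinW : Real.sin W = ω / c := by
    have h1 : Real.sin W = Real.sqrt (1 - Real.cos W ^ 2) :=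
      Real.sin_eq_sqrt_one_sub_cos_sq hWpos.le hWlepi
    have h2 : 1 - (b / c) ^ 2 = (c ^ 2 - b ^ 2) / c ^ 2 := by
      field_simp
    rw [h1, hcosW, h2, Real.sqrt_div hcb2.le, ← hω, Real.sqrt_sq hc.le]
  -- the trig identity
  have htrig : ∀ x : ℝ, ω * Real.cos x - b * Real.sin x = c * Real.sin (W - x) := by
    intro x
    rw [Real.sin_sub, hsinW, hcosW]
    field_simp
  -- the comparison function and its derivatives
  set A : ℝ := ρ' 0 / ω with hA
  have hApos : 0 < A := div_pos h0' hωpos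
  set f : ℝ → ℝ := fun τ => A * Real.exp (-(b * τ)) * Real.sin (ω * τ) with hfdef
  set g : ℝ → ℝ := fun τ =>
    A * Real.exp (-(b * τ)) * (ω * Real.cos (ω * τ) - b * Real.sin (ω * τ)) with hgdef
  set g' : ℝ → ℝ := fun τ =>
    A * Real.exp (-(b * τ)) *
      (-(2 * b * ω) * Real.cos (ω * τ) + (b ^ 2 - ω ^ 2) * Real.sin (ω * τ)) with hg'def
  have hexp : ∀ τ : ℝ, HasDerivAt (fun τ : ℝ => Real.exp (-(b * τ)))
      (-b * Real.exp (-(b * τ))) τ := by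
    intro τ
    have h1 : HasDerivAt (fun τ : ℝ => -(b * τ)) (-b) τ := by
      simpa using ((hasDerivAt_id τ).const_mul b).fun_neg
    simpa [mul_comm] using h1.exp
  have hsin : ∀ τ : ℝ, HasDerivAt (fun τ : ℝ => Real.sin (ω * τ))
      (ω * Real.cos (ω * τ)) τ := by
    intro τ
    have h1 : HasDerivAt (fun τ : ℝ => ω * τ) ω τ := by
      simpa using (hasDerivAt_id τ).const_mul ω
    simpa [mul_comm] using h1.sin
  have hcos : ∀ τ : ℝ, HasDerivAt (fun τ : ℝ => Real.cos (ω * τ))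
      (-(ω * Real.sin (ω * τ))) τ := by
    intro τ
    have h1 : HasDerivAt (fun τ : ℝ => ω * τ) ω τ := by
      simpa using (hasDerivAt_id τ).const_mul ω
    have := h1.cos
    convert this using 1
    ring
  have hf : ∀ τ : ℝ, HasDerivAt f (g τ) τ := by
    intro τ
    have h1 := ((hexp τ).fun_mul (hsin τ)).const_mul A
    have h2 : HasDerivAt (fun τ => A * (Real.exp (-(b * τ)) * Real.sin (ω * τ)))
        (g τ) τ := by
      refine h1.congr_deriv ?_
      simp only [hgdef]
      ring
    simpa [hfdef, mul_assoc] using h2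
  have hg : ∀ τ : ℝ, HasDerivAt g (g' τ) τ := by
    intro τ
    have hin : HasDerivAt (fun τ : ℝ => ω * Real.cos (ω * τ) - b * Real.sin (ω * τ))
        (ω * -(ω * Real.sin (ω * τ)) - b * (ω * Real.cos (ω * τ))) τ :=
      ((hcos τ).const_mul ω).sub ((hsin τ).const_mul b)
    have h1 := ((hexp τ).fun_mul hin).const_mul A
    have h2 : HasDerivAt
        (fun τ => A * (Real.exp (-(b * τ)) * (ω * Real.cos (ω * τ) - b * Real.sin (ω * τ))))
        (g' τ) τ := by
      refine h1.congr_deriv ?_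
      simp only [hg'def]
      ring
    simpa [hgdef, mul_assoc] using h2
  have hODE : ∀ τ : ℝ, g' τ + 2 * b * g τ + c ^ 2 * f τ = 0 := by
    intro τ
    simp only [hg'def, hgdef, hfdef]
    linear_combination (-(A * Real.exp (-(b * τ)) * Real.sin (ω * τ))) * hω2
  have hf0 : f 0 = 0 := by simp [hfdef]
  have hg0 : g 0 = ρ' 0 := by
    simp only [hgdef]
    simp
    rw [hA]
    field_simp
  -- basic interval facts
  set m : ℝ := min T Tm with hm
  have hTmpos : 0 < Tm := by rw [hTm]; exact div_pos hWpos hωpos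
  have hm0 : 0 < m := lt_min hT hTmpos
  have hmT : m ≤ T := min_le_left _ _
  have hmTm : m ≤ Tm := min_le_right _ _
  have hωτ_le : ∀ τ : ℝ, τ ≤ m → ω * τ ≤ W := by
    intro τ hτ
    have : τ ≤ Tm := hτ.trans hmTm
    rw [hTm] at this
    calc ω * τ ≤ ω * (W / ω) := mul_le_mul_of_nonneg_left this hωpos.le
    _ = W := by field_simp
  have hfpos : ∀ τ ∈ Set.Ioc 0 m, 0 < f τ := by
    intro τ hτ
    have h1 : 0 < ω * τ := mul_pos hωpos hτ.1
    have h2 : ω * τ < π := lt_of_le_of_lt (hωτ_le τ hτ.2) (by linarith [Real.pi_pos])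
    have h3 := Real.sin_pos_of_pos_of_lt_pi h1 h2
    exact mul_pos (mul_pos hApos (Real.exp_pos _)) h3
  have hgnonneg : ∀ τ ∈ Set.Ioc 0 m, 0 ≤ g τ := by
    intro τ hτ
    have h1 : 0 ≤ W - ω * τ := by linarith [hωτ_le τ hτ.2]
    have h2 : W - ω * τ ≤ π := by linarith [mul_pos hωpos hτ.1, hWlepi]
    have h3 := Real.sin_nonneg_of_nonneg_of_le_pi h1 h2
    simp only [hgdef]
    rw [htrig (ω * τ)]
    exact mul_nonneg (mul_nonneg hApos.le (Real.exp_pos _).le) (mul_nonneg hc.le h3)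
  have hgpos : ∀ τ ∈ Set.Ioo 0 m, 0 < g τ := by
    intro τ hτ
    have hlt : ω * τ < W := by
      have h4 := hωτ_le m le_rfl
      have h5 : ω * τ < ω * m := mul_lt_mul_of_pos_left hτ.2 hωpos
      linarith
    have h1 : 0 < W - ω * τ := by linarith
    have h2 : W - ω * τ < π := by linarith [mul_pos hωpos hτ.1, hWlepi, Real.pi_pos]
    have h3 := Real.sin_pos_of_pos_of_lt_pi h1 h2
    simp only [hgdef]
    rw [htrig (ω * τ)]
    exact mul_pos (mul_pos hApos (Real.exp_pos _)) (mul_pos hc h3)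
  -- continuity of ρ, ρ'
  have hρcont : ContinuousOn ρ (Set.Icc 0 T) := fun x hx => (hd1 x hx).continuousWithinAt
  have hρ'cont : ContinuousOn ρ' (Set.Icc 0 T) := fun x hx => (hd2 x hx).continuousWithinAt
  have hfcont : Continuous f := by
    apply Continuous.mul
    · exact continuous_const.mul (Real.continuous_exp.comp (by fun_prop))
    · exact Real.continuous_sin.comp (by fun_prop)
  have hgcont : Continuous g := by
    apply Continuous.mul
    · exact continuous_const.mul (Real.continuous_exp.comp (by fun_prop))
    · apply Continuous.sub
      · exact continuous_const.mul (Real.continuous_cos.comp (by fun_prop))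
      · exact continuous_const.mul (Real.continuous_sin.comp (by fun_prop))
  -- derivatives at interior points
  have hmemint : ∀ x ∈ Set.Ioo 0 m, Set.Icc (0:ℝ) T ∈ nhds x := by
    intro x hx
    exact Icc_mem_nhds hx.1 (lt_of_lt_of_le hx.2 hmT)
  have hρd : ∀ x ∈ Set.Ioo 0 m, HasDerivAt ρ (ρ' x) x := by
    intro x hx
    exact (hd1 x ⟨hx.1.le, hx.2.le.trans hmT⟩).hasDerivAt (hmemint x hx)
  have hρ'd : ∀ x ∈ Set.Ioo 0 m, HasDerivAt ρ' (ρ'' x) x := by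
    intro x hx
    exact (hd2 x ⟨hx.1.le, hx.2.le.trans hmT⟩).hasDerivAt (hmemint x hx)
  -- Step A : Wronskian nonnegativity
  set v : ℝ → ℝ := fun τ => ρ' τ * f τ - ρ τ * g τ with hvdef
  set w : ℝ → ℝ := fun τ => Real.exp (2 * b * τ) * v τ with hwdef
  have hvnonneg : ∀ τ ∈ Set.Icc 0 m, 0 ≤ v τ := by
    have hexp2 : ∀ τ : ℝ, HasDerivAt (fun τ : ℝ => Real.exp (2 * b * τ))
        (2 * b * Real.exp (2 * b * τ)) τ := by
      intro τ
      have h1 : HasDerivAt (fun τ : ℝ => 2 * b * τ) (2 * b) τ := by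
        simpa using (hasDerivAt_id τ).const_mul (2 * b)
      simpa [mul_comm] using h1.exp
    have hwmono : MonotoneOn w (Set.Icc 0 m) := by
      apply monotoneOn_of_hasDerivWithinAt_nonneg (convex_Icc 0 m)
        (f' := fun x => Real.exp (2 * b * x) * (f x * (ρ'' x + 2 * b * ρ' x + c ^ 2 * ρ x)))
      · simp only [hwdef, hvdef]
        apply ContinuousOn.mul
        · exact (Real.continuous_exp.comp (continuous_const.mul continuous_id)).continuousOn
        · exact ((hρ'cont.mono (Set.Icc_subset_Icc le_rfl hmT)).mul hfcont.continuousOn).sub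
            ((hρcont.mono (Set.Icc_subset_Icc le_rfl hmT)).mul hgcont.continuousOn)
      · intro x hx
        rw [interior_Icc] at hx
        have hder : HasDerivAt w
            (2 * b * Real.exp (2 * b * x) * v x +
              Real.exp (2 * b * x) *
                ((ρ'' x * f x + ρ' x * g x) - (ρ' x * g x + ρ x * g' x))) x := by
          exact (hexp2 x).mul
            (((hρ'd x hx).mul (hf x)).sub ((hρd x hx).mul (hg x)))
        have heq : 2 * b * Real.exp (2 * b * x) * v x +
            Real.exp (2 * b * x) *
              ((ρ'' x * f x + ρ' x * g x) - (ρ' x * g x + ρ x * g' x)) =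
            Real.exp (2 * b * x) * (f x * (ρ'' x + 2 * b * ρ' x + c ^ 2 * ρ x)) := by
          have h := hODE x
          simp only [hvdef]
          linear_combination (-(Real.exp (2 * b * x)) * ρ x) * h
        rw [heq] at hder
        rw [interior_Icc]
        exact hder.hasDerivWithinAt
      · intro x hx
        rw [interior_Icc] at hx
        have h1 : 0 ≤ f x := by
          rcases eq_or_lt_of_le hx.1.le with h | h
          · simp [hfdef, ← h]
          · exact (hfpos x ⟨h, hx.2.le⟩).le
        have h2 := hineq x ⟨hx.1.le, hx.2.le.trans hmT⟩
        exact mul_nonneg (Real.exp_pos _).le (mul_nonneg h1 h2)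
    intro τ hτ
    have h1 : w 0 ≤ w τ := hwmono ⟨le_rfl, hm0.le⟩ hτ hτ.1
    have h2 : w 0 = 0 := by simp [hwdef, hvdef, h0, hf0]
    rw [h2] at h1
    have h3 : 0 < Real.exp (2 * b * τ) := Real.exp_pos _
    simp only [hwdef] at h1
    nlinarith
  -- Step B : ratio monotone
  have hGmono : MonotoneOn (fun τ => ρ τ / f τ) (Set.Ioc 0 m) := by
    apply monotoneOn_of_hasDerivWithinAt_nonneg (convex_Ioc 0 m)
      (f' := fun x => (ρ' x * f x - ρ x * g x) / (f x) ^ 2)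
    · apply ContinuousOn.div
      · exact hρcont.mono fun x hx => ⟨hx.1.le, hx.2.trans hmT⟩
      · exact hfcont.continuousOn
      · exact fun x hx => (hfpos x hx).ne'
    · intro x hx
      rw [interior_Ioc] at hx
      have hder : HasDerivAt (fun τ => ρ τ / f τ)
          ((ρ' x * f x - ρ x * g x) / (f x) ^ 2) x :=
        (hρd x hx).div (hf x) (hfpos x ⟨hx.1, hx.2.le⟩).ne'
      rw [interior_Ioc]
      exact hder.hasDerivWithinAt
    · intro x hx
      rw [interior_Ioc] at hx
      have h1 := hvnonneg x ⟨hx.1.le, hx.2.le⟩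
      have h2 : 0 < f x := hfpos x ⟨hx.1, hx.2.le⟩
      simp only [hvdef] at h1
      exact div_nonneg h1 (sq_nonneg _)
  -- Step C : limit of the ratio at 0, giving f ≤ ρ
  have hkey : ∀ t ∈ Set.Ioc 0 m, f t ≤ ρ t := by
    intro t ht
    have hftpos : 0 < f t := hfpos t ht
    rw [← one_le_div hftpos]
    have hneBot : (nhdsWithin (0:ℝ) (Set.Ioc 0 t)).NeBot := left_nhdsWithin_Ioc_neBot ht.1
    have hsub1 : Set.Ioc (0:ℝ) t ⊆ Set.Icc 0 T \ {0} := by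
      intro x hx
      exact ⟨⟨hx.1.le, hx.2.trans (ht.2.trans hmT)⟩, hx.1.ne'⟩
    have hsub2 : Set.Ioc (0:ℝ) t ⊆ {(0:ℝ)}ᶜ := fun x hx => hx.1.ne'
    have hslopeρ : Filter.Tendsto (fun ε => ρ ε / ε) (nhdsWithin 0 (Set.Ioc 0 t))
        (nhds (ρ' 0)) := by
      have h1 := hd1 0 ⟨le_rfl, hT.le⟩
      rw [hasDerivWithinAt_iff_tendsto_slope] at h1
      have h2 := h1.mono_left (nhdsWithin_mono 0 hsub1)
      refine h2.congr' ?_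
      filter_upwards [self_mem_nhdsWithin] with x hx
      simp [slope_def_field, h0]
    have hslopef : Filter.Tendsto (fun ε => f ε / ε) (nhdsWithin 0 (Set.Ioc 0 t))
        (nhds (ρ' 0)) := by
      have h1 := (hf 0).hasDerivWithinAt (s := {(0:ℝ)}ᶜ)
      rw [hasDerivWithinAt_iff_tendsto_slope] at h1
      have h2 := h1.mono_left (nhdsWithin_mono 0 (by
        intro x hx
        exact ⟨hsub2 hx, hx.1.ne'⟩))
      rw [hg0] at h2
      refine h2.congr' ?_
      filter_upwards [self_mem_nhdsWithin] with x hx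
      simp [slope_def_field, hf0]
    have hratio : Filter.Tendsto (fun ε => ρ ε / f ε) (nhdsWithin 0 (Set.Ioc 0 t))
        (nhds 1) := by
      have h3 := hslopeρ.div hslopef (ne_of_gt h0')
      have h4 : ρ' 0 / ρ' 0 = 1 := div_self (ne_of_gt h0')
      rw [h4] at h3
      refine h3.congr' ?_
      filter_upwards [self_mem_nhdsWithin] with x hx
      have hx0 : x ≠ 0 := ne_of_gt hx.1
      have hfx : f x ≠ 0 := (hfpos x ⟨hx.1, hx.2.trans ht.2⟩).ne'
      simp only [Pi.div_apply]
      field_simp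
    have hev : ∀ᶠ ε in nhdsWithin 0 (Set.Ioc 0 t), ρ ε / f ε ≤ ρ t / f t := by
      filter_upwards [self_mem_nhdsWithin] with x hx
      exact hGmono ⟨hx.1, hx.2.trans ht.2⟩ ht hx.2
    exact le_of_tendsto hratio hev
  -- derivative comparison
  have hkey' : ∀ t ∈ Set.Ioc 0 m, g t ≤ ρ' t := by
    intro τ hτ'
    have h1 := hvnonneg τ ⟨hτ'.1.le, hτ'.2⟩
    simp only [hvdef] at h1
    have h2 : 0 < f τ := hfpos τ hτ'
    have h3 : 0 ≤ g τ := hgnonneg τ hτ'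
    have h4 : f τ ≤ ρ τ := hkey τ hτ'
    have h5 : g τ * f τ ≤ ρ' τ * f τ := by nlinarith [mul_nonneg (sub_nonneg.mpr h4) h3]
    exact le_of_mul_le_mul_right h5 h2
  refine ⟨fun τ hτ => ⟨hkey τ hτ, hkey' τ hτ⟩, ?_⟩
  intro τ hτ
  exact lt_of_lt_of_le (hgpos τ hτ) (hkey' τ ⟨hτ.1, hτ.2.le⟩)
end

section
/- Let b, c be real numbers with 0 ≤ b < c, set ω := √(c² − b²), let W₊ := W₊(b,c) and T₊ := W₊/ω. Let T₁ < T be real numbers and let ρ : [T₁, T] → ℝ be twice continuously differentiable with ρ(T₁) > 0 and ρ'(T₁) = 0, such that ρ(τ) > 0 for all τ ∈ [T₁, T), and ρ''(τ) + 2b·ρ'(τ) + c²·ρ(τ) ≤ 0 for all τ ∈ [T₁, T]. Then T ≤ T₁ + T₊, and ρ(τ) ≤ ρ(T₁)·(c/ω)·e^{−b·(τ−T₁)}·sin(ω·(T₁ + T₊ − τ)) for all τ ∈ [T₁, T). -/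
open Real

noncomputable def oscF (A b ω T₁ K : ℝ) (t : ℝ) : ℝ :=
  A * Real.exp (-(b * (t - T₁))) * Real.sin (ω * (K - t))

noncomputable def oscD (A b ω T₁ K : ℝ) (t : ℝ) : ℝ :=
  A * Real.exp (-(b * (t - T₁))) *
    (-b * Real.sin (ω * (K - t)) - ω * Real.cos (ω * (K - t)))

noncomputable def oscD2 (A b ω T₁ K : ℝ) (t : ℝ) : ℝ :=
  A * Real.exp (-(b * (t - T₁))) *
    ((b ^ 2 - ω ^ 2) * Real.sin (ω * (K - t)) + 2 * b * ω * Real.cos (ω * (K - t)))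

lemma exp_part_hasDerivAt (b T₁ t : ℝ) :
    HasDerivAt (fun s : ℝ => Real.exp (-(b * (s - T₁))))
      (Real.exp (-(b * (t - T₁))) * (-b)) t := by
  have h1 : HasDerivAt (fun s : ℝ => -(b * (s - T₁))) (-b) t := by
    exact (((hasDerivAt_id t).sub_const T₁).const_mul b).neg.congr_deriv (by ring)
  simpa using h1.exp

lemma lin_part_hasDerivAt (ω K t : ℝ) :
    HasDerivAt (fun s : ℝ => ω * (K - s)) (-ω) t := by
  simpa using ((hasDerivAt_id t).const_sub K).const_mul ω

lemma oscF_hasDerivAt (A b ω T₁ K t : ℝ) :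
    HasDerivAt (oscF A b ω T₁ K) (oscD A b ω T₁ K t) t := by
  have hE := (exp_part_hasDerivAt b T₁ t).const_mul A
  have hS := (lin_part_hasDerivAt ω K t).sin
  have h := hE.mul hS
  have heq : A * (Real.exp (-(b * (t - T₁))) * (-b)) * Real.sin (ω * (K - t)) +
      A * Real.exp (-(b * (t - T₁))) * (Real.cos (ω * (K - t)) * (-ω)) =
      oscD A b ω T₁ K t := by
    simp only [oscD]; ring
  exact heq ▸ h

lemma oscD_hasDerivAt (A b ω T₁ K t : ℝ) :
    HasDerivAt (oscD A b ω T₁ K) (oscD2 A b ω T₁ K t) t := by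
  have hE := (exp_part_hasDerivAt b T₁ t).const_mul A
  have hS := ((lin_part_hasDerivAt ω K t).sin.const_mul (-b)).sub
    ((lin_part_hasDerivAt ω K t).cos.const_mul ω)
  have h := hE.mul hS
  have heq : A * (Real.exp (-(b * (t - T₁))) * (-b)) *
        (-b * Real.sin (ω * (K - t)) - ω * Real.cos (ω * (K - t))) +
      A * Real.exp (-(b * (t - T₁))) *
        (-b * (Real.cos (ω * (K - t)) * (-ω)) - ω * (-Real.sin (ω * (K - t)) * (-ω))) =
      oscD2 A b ω T₁ K t := by
    simp only [oscD2]; ring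
  exact heq ▸ h

lemma osc_ode (A b c ω T₁ K t : ℝ) (h : ω ^ 2 = c ^ 2 - b ^ 2) :
    oscD2 A b ω T₁ K t + 2 * b * oscD A b ω T₁ K t + c ^ 2 * oscF A b ω T₁ K t = 0 := by
  simp only [oscF, oscD, oscD2]
  have : c ^ 2 = ω ^ 2 + b ^ 2 := by linarith
  rw [this]; ring

lemma oscF_continuous (A b ω T₁ K : ℝ) : Continuous (oscF A b ω T₁ K) :=
  continuous_iff_continuousAt.2 fun t => (oscF_hasDerivAt A b ω T₁ K t).continuousAt

lemma oscD_continuous (A b ω T₁ K : ℝ) : Continuous (oscD A b ω T₁ K) :=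
  continuous_iff_continuousAt.2 fun t => (oscD_hasDerivAt A b ω T₁ K t).continuousAt

set_option maxHeartbeats 1000000 in
/-- Upper Sturm comparison, decreasing phase: a `C²` function `ρ` on `[T₁, T]` with
`ρ(T₁) > 0`, `ρ'(T₁) = 0`, `ρ > 0` on `[T₁, T)`, and `ρ'' + 2b·ρ' + c²·ρ ≤ 0` on
`[T₁, T]` satisfies `T ≤ T₁ + T₊` with `T₊ = W₊(b,c)/ω`, and is dominated by the
explicit oscillator solution `ρ(T₁)·(c/ω)·e^{-b(τ-T₁)}·sin(ω(T₁+T₊-τ))` on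
`[T₁, T)`. -/
theorem sturm_comparison_upper_decreasing
    (b c W : ℝ) (hb : 0 ≤ b) (hbc : b < c)
    (hW : W ∈ Set.Ico (π / 2) π) (hcosW : Real.cos W = -(b / c))
    (ω : ℝ) (hω : ω = Real.sqrt (c ^ 2 - b ^ 2))
    (Tp : ℝ) (hTp : Tp = W / ω)
    (T₁ T : ℝ) (hT : T₁ < T)
    (ρ ρ' ρ'' : ℝ → ℝ)
    (hd1 : ∀ t ∈ Set.Icc T₁ T, HasDerivWithinAt ρ (ρ' t) (Set.Icc T₁ T) t)
    (hd2 : ∀ t ∈ Set.Icc T₁ T, HasDerivWithinAt ρ' (ρ'' t) (Set.Icc T₁ T) t)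
    (hcont : ContinuousOn ρ'' (Set.Icc T₁ T))
    (h1 : 0 < ρ T₁) (h1' : ρ' T₁ = 0)
    (hpos : ∀ τ ∈ Set.Ico T₁ T, 0 < ρ τ)
    (hineq : ∀ τ ∈ Set.Icc T₁ T, ρ'' τ + 2 * b * ρ' τ + c ^ 2 * ρ τ ≤ 0) :
    T ≤ T₁ + Tp ∧
      ∀ τ ∈ Set.Ico T₁ T,
        ρ τ ≤ ρ T₁ * (c / ω) * Real.exp (-(b * (τ - T₁))) *
            Real.sin (ω * (T₁ + Tp - τ)) := by
  have hc : 0 < c := lt_of_le_of_lt hb hbc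
  have hb2c2 : 0 < c ^ 2 - b ^ 2 := by nlinarith
  have hωpos : 0 < ω := by rw [hω]; exact Real.sqrt_pos.2 hb2c2
  have hω2 : ω ^ 2 = c ^ 2 - b ^ 2 := by rw [hω]; exact Real.sq_sqrt hb2c2.le
  have hWpos : 0 < W := lt_of_lt_of_le (by positivity) hW.1
  have hWpi : W < π := hW.2
  have hcne : c ≠ 0 := hc.ne'
  have hωne : ω ≠ 0 := hωpos.ne'
  have hsinW : Real.sin W = ω / c := by
    have hs0 : 0 ≤ Real.sin W := Real.sin_nonneg_of_nonneg_of_le_pi hWpos.le hWpi.le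
    have hsq : Real.sin W ^ 2 = (ω / c) ^ 2 := by
      have hpy := Real.sin_sq_add_cos_sq W
      rw [hcosW] at hpy
      field_simp at hpy ⊢
      nlinarith [hpy, hω2]
    have h2 : 0 ≤ ω / c := by positivity
    rw [← Real.sqrt_sq hs0, hsq, Real.sqrt_sq h2]
  have hTppos : 0 < Tp := by rw [hTp]; positivity
  have hωTp : ω * Tp = W := by rw [hTp]; field_simp
  set K : ℝ := T₁ + Tp with hK
  set A : ℝ := ρ T₁ * (c / ω) with hA
  have hApos : 0 < A := by rw [hA]; positivity
  -- values at T₁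
  have hKT₁ : ω * (K - T₁) = W := by
    rw [hK, show T₁ + Tp - T₁ = Tp from by ring]; exact hωTp
  have hoscF_T₁ : oscF A b ω T₁ K T₁ = ρ T₁ := by
    simp only [oscF, hKT₁, sub_self, mul_zero, neg_zero, Real.exp_zero, mul_one, hsinW]
    rw [hA]; field_simp
  have hoscD_T₁ : oscD A b ω T₁ K T₁ = 0 := by
    simp only [oscD, hKT₁, sub_self, mul_zero, neg_zero, Real.exp_zero, mul_one,
      hsinW, hcosW]
    field_simp
    ring
  -- positivity of the comparison solution
  have hoscF_pos : ∀ t, T₁ ≤ t → t < K → 0 < oscF A b ω T₁ K t := by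
    intro t ht1 ht2
    have harg1 : 0 < ω * (K - t) := by
      have : 0 < K - t := by linarith
      positivity
    have harg2 : ω * (K - t) < π := by
      have h3 : ω * (K - t) ≤ ω * (K - T₁) := by
        apply mul_le_mul_of_nonneg_left (by linarith) hωpos.le
      rw [hKT₁] at h3; linarith
    have := Real.sin_pos_of_pos_of_lt_pi harg1 harg2
    simp only [oscF]
    positivity
  have hρcont : ContinuousOn ρ (Set.Icc T₁ T) := fun t ht => (hd1 t ht).continuousWithinAt
  have hρ'cont : ContinuousOn ρ' (Set.Icc T₁ T) := fun t ht => (hd2 t ht).continuousWithinAt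
  -- key comparison lemma
  have key : ∀ s, T₁ ≤ s → s < T → s < K → ρ s ≤ oscF A b ω T₁ K s := by
    intro s hs1 hs2 hs3
    have hsub : Set.Icc T₁ s ⊆ Set.Icc T₁ T := Set.Icc_subset_Icc le_rfl hs2.le
    have hint : Set.Ioo T₁ s ⊆ interior (Set.Icc T₁ T) := by
      rw [interior_Icc]
      exact Set.Ioo_subset_Ioo le_rfl hs2.le
    -- derivatives at interior points are unrestricted
    have hρat : ∀ x ∈ Set.Ioo T₁ s, HasDerivAt ρ (ρ' x) x := by
      intro x hx
      exact (hd1 x (hsub (Set.Ioo_subset_Icc_self hx))).hasDerivAt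
        (mem_interior_iff_mem_nhds.1 (hint hx))
    have hρ'at : ∀ x ∈ Set.Ioo T₁ s, HasDerivAt ρ' (ρ'' x) x := by
      intro x hx
      exact (hd2 x (hsub (Set.Ioo_subset_Icc_self hx))).hasDerivAt
        (mem_interior_iff_mem_nhds.1 (hint hx))
    set σ : ℝ → ℝ := oscF A b ω T₁ K with hσ
    set σ' : ℝ → ℝ := oscD A b ω T₁ K with hσ'
    set Jf : ℝ → ℝ := fun t => Real.exp (2 * b * t) * (σ t * ρ' t - ρ t * σ' t) with hJf
    have hJderiv : ∀ x ∈ Set.Ioo T₁ s,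
        HasDerivAt Jf
          (Real.exp (2 * b * x) * σ x * (ρ'' x + 2 * b * ρ' x + c ^ 2 * ρ x)) x := by
      intro x hx
      have hexp : HasDerivAt (fun t : ℝ => Real.exp (2 * b * t))
          (Real.exp (2 * b * x) * (2 * b)) x := by
        have : HasDerivAt (fun t : ℝ => 2 * b * t) (2 * b) x := by
          simpa using (hasDerivAt_id x).const_mul (2 * b)
        simpa using this.exp
      have hin : HasDerivAt (fun t => σ t * ρ' t - ρ t * σ' t)
          (σ' x * ρ' x + σ x * ρ'' x -
            (ρ' x * σ' x + ρ x * oscD2 A b ω T₁ K x)) x :=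
        (((oscF_hasDerivAt A b ω T₁ K x).mul (hρ'at x hx)).sub
          ((hρat x hx).mul (oscD_hasDerivAt A b ω T₁ K x)))
      have h := hexp.mul hin
      have hode := osc_ode A b c ω T₁ K x hω2
      have heq : Real.exp (2 * b * x) * (2 * b) * (σ x * ρ' x - ρ x * σ' x) +
          Real.exp (2 * b * x) *
            (σ' x * ρ' x + σ x * ρ'' x - (ρ' x * σ' x + ρ x * oscD2 A b ω T₁ K x)) =
          Real.exp (2 * b * x) * σ x * (ρ'' x + 2 * b * ρ' x + c ^ 2 * ρ x) := by
        simp only [hσ, hσ']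
        linear_combination (-(Real.exp (2 * b * x) * ρ x)) * hode
      exact heq ▸ h
    have hJanti : AntitoneOn Jf (Set.Icc T₁ s) := by
      apply antitoneOn_of_deriv_nonpos (convex_Icc _ _)
      · apply ContinuousOn.mul ((Real.continuous_exp.comp (continuous_const.mul continuous_id)).continuousOn)
        exact ((((oscF_continuous A b ω T₁ K).continuousOn).mono hsub).mul
          (hρ'cont.mono hsub)).sub
          ((hρcont.mono hsub).mul (((oscD_continuous A b ω T₁ K).continuousOn).mono hsub))
      · rw [interior_Icc]
        intro x hx
        exact (hJderiv x hx).differentiableAt.differentiableWithinAt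
      · rw [interior_Icc]
        intro x hx
        rw [(hJderiv x hx).deriv]
        have hxIcc : x ∈ Set.Icc T₁ T := hsub (Set.Ioo_subset_Icc_self hx)
        have hσnn : 0 ≤ σ x := (hoscF_pos x hx.1.le (lt_trans hx.2 hs3)).le
        have hdef := hineq x hxIcc
        have hen : 0 ≤ Real.exp (2 * b * x) * σ x := by positivity
        exact mul_nonpos_of_nonneg_of_nonpos hen hdef
    have hJT₁ : Jf T₁ = 0 := by
      simp [hJf, hoscD_T₁, h1']
    have hJle : ∀ x ∈ Set.Icc T₁ s, Jf x ≤ 0 := by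
      intro x hx
      have := hJanti (Set.left_mem_Icc.2 hs1) hx hx.1
      rwa [hJT₁] at this
    -- quotient function
    have hσpos : ∀ x ∈ Set.Icc T₁ s, 0 < σ x := fun x hx =>
      hoscF_pos x hx.1 (lt_of_le_of_lt hx.2 hs3)
    have hganti : AntitoneOn (fun t => ρ t / σ t) (Set.Icc T₁ s) := by
      apply antitoneOn_of_deriv_nonpos (convex_Icc _ _)
      · exact (hρcont.mono hsub).div
          (((oscF_continuous A b ω T₁ K).continuousOn).mono hsub)
          (fun x hx => (hσpos x hx).ne')
      · rw [interior_Icc]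
        intro x hx
        exact (((hρat x hx).div (oscF_hasDerivAt A b ω T₁ K x)
          (hσpos x (Set.Ioo_subset_Icc_self hx)).ne').differentiableAt).differentiableWithinAt
      · rw [interior_Icc]
        intro x hx
        rw [show (fun t => ρ t / σ t) = ρ / oscF A b ω T₁ K from rfl,
          ((hρat x hx).div (oscF_hasDerivAt A b ω T₁ K x)
          (hσpos x (Set.Ioo_subset_Icc_self hx)).ne').deriv]
        apply div_nonpos_of_nonpos_of_nonneg _ (sq_nonneg _)
        have hJx := hJle x (Set.Ioo_subset_Icc_self hx)
        simp only [hJf] at hJx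
        nlinarith [Real.exp_pos (2 * b * x)]
    have hs0 : T₁ ∈ Set.Icc T₁ s := Set.left_mem_Icc.2 hs1
    have hsmem : s ∈ Set.Icc T₁ s := Set.right_mem_Icc.2 hs1
    have hmono : ρ s / σ s ≤ ρ T₁ / σ T₁ := hganti hs0 hsmem hs1
    have hσT₁ : σ T₁ = ρ T₁ := hoscF_T₁
    rw [hσT₁, div_self h1.ne'] at hmono
    have this := hmono
    have hσs := hσpos s hsmem
    calc ρ s = (ρ s / σ s) * σ s := (div_mul_cancel₀ _ hσs.ne').symm
    _ ≤ 1 * σ s := mul_le_mul_of_nonneg_right this hσs.le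
    _ = oscF A b ω T₁ K s := by rw [one_mul]
  -- part 1 : T ≤ K
  have hpart1 : T ≤ K := by
    by_contra hKT
    push_neg at hKT
    have hT₁K : T₁ < K := by rw [hK]; linarith
    have hKmem : K ∈ Set.Ico T₁ T := ⟨hT₁K.le, hKT⟩
    have hρK : 0 < ρ K := hpos K hKmem
    haveI hne : Filter.NeBot (nhdsWithin K (Set.Ioo T₁ K)) := right_nhdsWithin_Ioo_neBot hT₁K
    have htendρ : Filter.Tendsto ρ (nhdsWithin K (Set.Ioo T₁ K)) (nhds (ρ K)) := by
      have := (hρcont K ⟨hT₁K.le, hKT.le⟩)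
      exact this.mono_left (nhdsWithin_mono K (fun x hx =>
        ⟨hx.1.le, (lt_trans hx.2 hKT).le⟩))
    have htendσ : Filter.Tendsto (oscF A b ω T₁ K) (nhdsWithin K (Set.Ioo T₁ K))
        (nhds (oscF A b ω T₁ K K)) :=
      ((oscF_continuous A b ω T₁ K).continuousAt).continuousWithinAt
    have hev : ∀ x ∈ Set.Ioo T₁ K, ρ x ≤ oscF A b ω T₁ K x := fun x hx =>
      key x hx.1.le (lt_trans hx.2 hKT) hx.2
    have hle : ρ K ≤ oscF A b ω T₁ K K :=
      le_of_tendsto_of_tendsto htendρ htendσ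
        (Filter.eventually_of_mem self_mem_nhdsWithin hev)
    have : oscF A b ω T₁ K K = 0 := by simp [oscF]
    linarith
  refine ⟨hpart1, ?_⟩
  intro τ hτ
  have := key τ hτ.1 hτ.2 (lt_of_lt_of_le hτ.2 hpart1)
  simpa [oscF, hA, hK] using this
end

section
/- Let b, c be real numbers with 0 ≤ b < c, set ω := √(c² − b²), let W₋ := W₋(b,c) and T₋ := W₋/ω. Let T₁ < T be real numbers and let ρ : [T₁, T] → ℝ be twice continuously differentiable with ρ(T₁) > 0 and ρ'(T₁) = 0, such that ρ(τ) > 0 for all τ ∈ [T₁, T), and ρ''(τ) − 2b·ρ'(τ) + c²·ρ(τ) ≥ 0 for all τ ∈ [T₁, T]. Then ρ(τ) ≥ ρ(T₁)·(c/ω)·e^{b·(τ−T₁)}·sin(ω·(T₁ + T₋ − τ)) for all τ ∈ [T₁, min(T, T₁ + T₋)]; in particular, if ρ(T) = 0 then T ≥ T₁ + T₋. -/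
open Real Set

noncomputable def osc (K b ω τ₂ T₁ A B : ℝ) : ℝ → ℝ := fun t =>
  K * Real.exp (b * (t - T₁)) * (A * Real.sin (ω * (τ₂ - t)) + B * Real.cos (ω * (τ₂ - t)))

lemma osc_hasDerivAt (K b ω τ₂ T₁ A B τ : ℝ) :
    HasDerivAt (osc K b ω τ₂ T₁ A B) (osc K b ω τ₂ T₁ (A * b + B * ω) (B * b - A * ω) τ) τ := by
  have h1 : HasDerivAt (fun t : ℝ => b * (t - T₁)) b τ := by
    simpa using ((hasDerivAt_id τ).sub_const T₁).const_mul b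
  have h2 := h1.exp
  have h3 : HasDerivAt (fun t : ℝ => ω * (τ₂ - t)) (-ω) τ := by
    simpa using ((hasDerivAt_const τ τ₂).sub (hasDerivAt_id τ)).const_mul ω
  have h4 := (h3.sin.const_mul A).add (h3.cos.const_mul B)
  have h5 := (h2.const_mul K).mul h4
  refine h5.congr_deriv ?_
  simp only [osc, Pi.add_apply]
  ring

lemma osc_continuous (K b ω τ₂ T₁ A B : ℝ) : Continuous (osc K b ω τ₂ T₁ A B) := by
  unfold osc; fun_prop

set_option maxHeartbeats 1000000 in
/-- Lower Sturm comparison, decreasing phase: a `C²` function `ρ` on `[T₁, T]` with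
`ρ(T₁) > 0`, `ρ'(T₁) = 0`, `ρ > 0` on `[T₁, T)`, and `ρ'' - 2b·ρ' + c²·ρ ≥ 0` on
`[T₁, T]` dominates the explicit oscillator solution
`ρ(T₁)·(c/ω)·e^{b(τ-T₁)}·sin(ω(T₁+T₋-τ))` on `[T₁, min(T, T₁+T₋)]`, where
`T₋ = W₋(b,c)/ω`; in particular, if `ρ(T) = 0` then `T ≥ T₁ + T₋`. -/
theorem sturm_comparison_lower_decreasing
    (b c W : ℝ) (hb : 0 ≤ b) (hbc : b < c)
    (hW : W ∈ Set.Ioc 0 (π / 2)) (hcosW : Real.cos W = b / c)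
    (ω : ℝ) (hω : ω = Real.sqrt (c ^ 2 - b ^ 2))
    (Tm : ℝ) (hTm : Tm = W / ω)
    (T₁ T : ℝ) (hT : T₁ < T)
    (ρ ρ' ρ'' : ℝ → ℝ)
    (hd1 : ∀ t ∈ Set.Icc T₁ T, HasDerivWithinAt ρ (ρ' t) (Set.Icc T₁ T) t)
    (hd2 : ∀ t ∈ Set.Icc T₁ T, HasDerivWithinAt ρ' (ρ'' t) (Set.Icc T₁ T) t)
    (hcont : ContinuousOn ρ'' (Set.Icc T₁ T))
    (h1 : 0 < ρ T₁) (h1' : ρ' T₁ = 0)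
    (hpos : ∀ τ ∈ Set.Ico T₁ T, 0 < ρ τ)
    (hineq : ∀ τ ∈ Set.Icc T₁ T, 0 ≤ ρ'' τ - 2 * b * ρ' τ + c ^ 2 * ρ τ) :
    (∀ τ ∈ Set.Icc T₁ (min T (T₁ + Tm)),
        ρ T₁ * (c / ω) * Real.exp (b * (τ - T₁)) *
            Real.sin (ω * (T₁ + Tm - τ)) ≤ ρ τ) ∧
      (ρ T = 0 → T₁ + Tm ≤ T) := by
  have hc : 0 < c := lt_of_le_of_lt hb hbc
  have hω2 : ω ^ 2 = c ^ 2 - b ^ 2 := by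
    rw [hω]; exact Real.sq_sqrt (by nlinarith)
  have hωpos : 0 < ω := by
    rw [hω]; exact Real.sqrt_pos.mpr (by nlinarith)
  have hW0 : 0 < W := hW.1
  have hWle : W ≤ π / 2 := hW.2
  have hπ : (0:ℝ) < π := Real.pi_pos
  have hsinW : Real.sin W = ω / c := by
    have h0 : 0 ≤ Real.sin W :=
      Real.sin_nonneg_of_nonneg_of_le_pi hW0.le (hWle.trans (by linarith))
    have hsq : Real.sin W ^ 2 = (ω / c) ^ 2 := by
      have hpy := Real.sin_sq_add_cos_sq W
      rw [hcosW] at hpy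
      rw [div_pow] at hpy ⊢
      rw [hω2]
      field_simp at hpy ⊢
      linarith
    calc Real.sin W = Real.sqrt (Real.sin W ^ 2) := (Real.sqrt_sq h0).symm
      _ = Real.sqrt ((ω / c) ^ 2) := by rw [hsq]
      _ = ω / c := Real.sqrt_sq (by positivity)
  have hTmpos : 0 < Tm := by rw [hTm]; positivity
  set τ₂ := T₁ + Tm with hτ₂def
  set m := min T τ₂ with hmdef
  have hm1 : T₁ < m := lt_min hT (by simp [hτ₂def]; linarith)
  have hmT : m ≤ T := min_le_left _ _
  have hmτ₂ : m ≤ τ₂ := min_le_right _ _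
  have hsub : Set.Icc T₁ m ⊆ Set.Icc T₁ T := Set.Icc_subset_Icc le_rfl hmT
  have hsub2 : Set.Ico T₁ m ⊆ Set.Icc T₁ T := fun x hx => ⟨hx.1, le_of_lt (lt_of_lt_of_le hx.2 hmT)⟩
  set K := ρ T₁ * (c / ω) with hKdef
  have hK : 0 < K := by positivity
  set F := fun A B => osc K b ω τ₂ T₁ A B with hFdef
  have hWeq : ω * (τ₂ - T₁) = W := by
    rw [hτ₂def, hTm]; field_simp; ring
  -- positivity/nonnegativity of the oscillator solution
  have hfpos : ∀ x, T₁ ≤ x → x < τ₂ → 0 < F 1 0 x := by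
    intro x hx1 hx2
    have hθ1 : 0 < ω * (τ₂ - x) := by nlinarith
    have hθ2 : ω * (τ₂ - x) ≤ W := by nlinarith [hWeq]
    have hsin : 0 < Real.sin (ω * (τ₂ - x)) :=
      Real.sin_pos_of_pos_of_lt_pi hθ1 (by linarith)
    simp only [hFdef, osc]
    have he := Real.exp_pos (b * (x - T₁))
    have heq : (1:ℝ) * Real.sin (ω * (τ₂ - x)) + 0 * Real.cos (ω * (τ₂ - x))
        = Real.sin (ω * (τ₂ - x)) := by ring
    rw [heq]
    exact mul_pos (mul_pos hK he) hsin
  have hfnn : ∀ x, T₁ ≤ x → x ≤ τ₂ → 0 ≤ F 1 0 x := by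
    intro x hx1 hx2
    rcases eq_or_lt_of_le hx2 with h | h
    · simp only [hFdef, osc, h]
      simp
    · exact (hfpos x hx1 h).le
  -- the ODE satisfied by the oscillator solution
  have hODE : ∀ t, F (b*b - ω*ω) (-(2*b*ω)) t - 2 * b * F b (-ω) t + c ^ 2 * F 1 0 t = 0 := by
    intro t
    simp only [hFdef, osc]
    linear_combination (-(K * Real.exp (b * (t - T₁)) * Real.sin (ω * (τ₂ - t)))) * hω2
  have hfd : ∀ τ, HasDerivAt (F 1 0) (F b (-ω) τ) τ := by
    intro τ
    have := osc_hasDerivAt K b ω τ₂ T₁ 1 0 τ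
    simpa using this
  have hfd' : ∀ τ, HasDerivAt (F b (-ω)) (F (b*b - ω*ω) (-(2*b*ω)) τ) τ := by
    intro τ
    have := osc_hasDerivAt K b ω τ₂ T₁ b (-ω) τ
    have e1 : b * b + -ω * ω = b*b - ω*ω := by ring
    have e2 : -ω * b - b * ω = -(2*b*ω) := by ring
    rwa [e1, e2] at this
  have hρc : ContinuousOn ρ (Set.Icc T₁ T) := fun x hx => (hd1 x hx).continuousWithinAt
  have hρ'c : ContinuousOn ρ' (Set.Icc T₁ T) := fun x hx => (hd2 x hx).continuousWithinAt
  -- derivatives at interior points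
  have hDρ : ∀ x ∈ Set.Ioo T₁ m, HasDerivAt ρ (ρ' x) x := by
    intro x hx
    have hmem : Set.Icc T₁ T ∈ nhds x :=
      Icc_mem_nhds hx.1 (lt_of_lt_of_le hx.2 hmT)
    exact (hd1 x ⟨hx.1.le, (lt_of_lt_of_le hx.2 hmT).le⟩).hasDerivAt hmem
  have hDρ' : ∀ x ∈ Set.Ioo T₁ m, HasDerivAt ρ' (ρ'' x) x := by
    intro x hx
    have hmem : Set.Icc T₁ T ∈ nhds x :=
      Icc_mem_nhds hx.1 (lt_of_lt_of_le hx.2 hmT)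
    exact (hd2 x ⟨hx.1.le, (lt_of_lt_of_le hx.2 hmT).le⟩).hasDerivAt hmem
  -- the Wronskian-type quantity
  set g := fun t => ρ' t * F 1 0 t - ρ t * F b (-ω) t with hgdef
  set E := fun t => Real.exp (-(2*b) * (t - T₁)) * g t with hEdef
  have hEcont : ContinuousOn E (Set.Icc T₁ m) := by
    apply ContinuousOn.mul
    · exact ((Real.continuous_exp.comp (by fun_prop)).continuousOn)
    · exact ((hρ'c.mono hsub).mul (osc_continuous K b ω τ₂ T₁ 1 0).continuousOn).sub
        ((hρc.mono hsub).mul (osc_continuous K b ω τ₂ T₁ b (-ω)).continuousOn)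
  have hED : ∀ x ∈ Set.Ioo T₁ m,
      HasDerivAt E (Real.exp (-(2*b) * (x - T₁)) *
        ((ρ'' x - 2 * b * ρ' x + c ^ 2 * ρ x) * F 1 0 x)) x := by
    intro x hx
    have hg : HasDerivAt g
        (ρ'' x * F 1 0 x + ρ' x * F b (-ω) x -
          (ρ' x * F b (-ω) x + ρ x * F (b*b - ω*ω) (-(2*b*ω)) x)) x :=
      ((hDρ' x hx).mul (hfd x)).sub ((hDρ x hx).mul (hfd' x))
    have hexp : HasDerivAt (fun t : ℝ => Real.exp (-(2*b) * (t - T₁)))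
        (Real.exp (-(2*b) * (x - T₁)) * (-(2*b))) x := by
      have h1 : HasDerivAt (fun t : ℝ => -(2*b) * (t - T₁)) (-(2*b)) x := by
        simpa using ((hasDerivAt_id x).sub_const T₁).const_mul (-(2*b))
      exact h1.exp
    have := hexp.mul hg
    refine this.congr_deriv ?_
    simp only [hgdef]
    have hode := hODE x
    linear_combination (-(Real.exp (-(2*b) * (x - T₁)) * ρ x)) * hode
  have hEmono : MonotoneOn E (Set.Icc T₁ m) := by
    apply monotoneOn_of_deriv_nonneg (convex_Icc _ _) hEcont
    · intro x hx
      rw [interior_Icc] at hx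
      exact (hED x hx).differentiableAt.differentiableWithinAt
    · intro x hx
      rw [interior_Icc] at hx
      rw [(hED x hx).deriv]
      have h1 := hineq x ⟨hx.1.le, (lt_of_lt_of_le hx.2 hmT).le⟩
      have h2 := hfnn x hx.1.le (le_of_lt (lt_of_lt_of_le hx.2 hmτ₂))
      positivity
  have hf'T₁ : F b (-ω) T₁ = 0 := by
    simp only [hFdef, osc]
    rw [hWeq, hsinW, hcosW]
    field_simp
    ring
  have hE0 : E T₁ = 0 := by
    simp only [hEdef, hgdef, h1', hf'T₁]
    ring
  have hgnn : ∀ x ∈ Set.Icc T₁ m, 0 ≤ g x := by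
    intro x hx
    have := hEmono (Set.left_mem_Icc.mpr (le_of_lt hm1)) hx hx.1
    rw [hE0] at this
    simp only [hEdef] at this
    nlinarith [Real.exp_pos (-(2*b) * (x - T₁))]
  -- the quotient is monotone on [T₁, m)
  set Q := fun t => ρ t / F 1 0 t with hQdef
  have hfT₁ : F 1 0 T₁ = ρ T₁ := by
    simp only [hFdef, osc]
    rw [hWeq, hsinW]
    field_simp [hKdef]
    simp only [sub_self, mul_zero, zero_mul, Real.exp_zero, mul_one, add_zero]
    rw [hKdef, mul_assoc, div_mul_cancel₀ c hωpos.ne', mul_comm]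
  have hQmono : MonotoneOn Q (Set.Ico T₁ m) := by
    apply monotoneOn_of_deriv_nonneg (convex_Ico _ _)
    · exact (hρc.mono hsub2).div (osc_continuous K b ω τ₂ T₁ 1 0).continuousOn
        (fun x hx => (hfpos x hx.1 (lt_of_lt_of_le hx.2 hmτ₂)).ne')
    · intro x hx
      rw [interior_Ico] at hx
      have hfx := hfpos x hx.1.le (lt_of_lt_of_le hx.2 hmτ₂)
      exact ((hDρ x hx).div (hfd x) hfx.ne').differentiableAt.differentiableWithinAt
    · intro x hx
      rw [interior_Ico] at hx
      have hfx := hfpos x hx.1.le (lt_of_lt_of_le hx.2 hmτ₂)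
      rw [show deriv Q x = _ from ((hDρ x hx).div (hfd x) hfx.ne').deriv]
      have hgx := hgnn x ⟨hx.1.le, hx.2.le⟩
      simp only [hgdef] at hgx
      positivity
  have hmain : ∀ τ ∈ Set.Ico T₁ m, F 1 0 τ ≤ ρ τ := by
    intro τ hτ
    have hQ1 : Q T₁ ≤ Q τ := hQmono ⟨le_rfl, hm1⟩ hτ hτ.1
    have hQT₁ : Q T₁ = 1 := by
      simp only [hQdef, hfT₁]
      exact div_self h1.ne'
    rw [hQT₁] at hQ1
    have hfτ := hfpos τ hτ.1 (lt_of_lt_of_le hτ.2 hmτ₂)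
    exact (one_le_div hfτ).mp hQ1
  -- extend to the endpoint m by continuity
  have hmend : F 1 0 m ≤ ρ m := by
    have hmem : m ∈ closure (Set.Ico T₁ m) := by
      rw [closure_Ico hm1.ne]; exact ⟨hm1.le, le_rfl⟩
    have hne : (nhdsWithin m (Set.Ico T₁ m)).NeBot :=
      mem_closure_iff_nhdsWithin_neBot.mp hmem
    have hcρm : ContinuousWithinAt ρ (Set.Ico T₁ m) m :=
      (hρc m ⟨hm1.le, hmT⟩).mono hsub2
    have hcfm : ContinuousWithinAt (F 1 0) (Set.Ico T₁ m) m :=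
      (osc_continuous K b ω τ₂ T₁ 1 0).continuousWithinAt
    have htend : Filter.Tendsto (fun t => ρ t - F 1 0 t)
        (nhdsWithin m (Set.Ico T₁ m)) (nhds (ρ m - F 1 0 m)) :=
      (hcρm.sub hcfm).tendsto
    have hev : ∀ᶠ x in nhdsWithin m (Set.Ico T₁ m), 0 ≤ ρ x - F 1 0 x := by
      filter_upwards [self_mem_nhdsWithin] with x hx
      exact sub_nonneg.mpr (hmain x hx)
    linarith [ge_of_tendsto htend hev]
  have hpart1 : ∀ τ ∈ Set.Icc T₁ m, F 1 0 τ ≤ ρ τ := by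
    intro τ hτ
    rcases eq_or_lt_of_le hτ.2 with h | h
    · rw [h]; exact hmend
    · exact hmain τ ⟨hτ.1, h⟩
  constructor
  · intro τ hτ
    have := hpart1 τ hτ
    have heq : F 1 0 τ = ρ T₁ * (c / ω) * Real.exp (b * (τ - T₁)) *
        Real.sin (ω * (τ₂ - τ)) := by
      simp only [hFdef, osc, hKdef]
      ring
    rw [heq] at this
    exact this
  · intro hρT
    by_contra hcon
    push_neg at hcon
    have hmeq : m = T := min_eq_left hcon.le
    have := hpart1 T (by rw [hmeq]; exact ⟨hT.le, le_rfl⟩)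
    rw [hρT] at this
    have := hfpos T hT.le hcon
    linarith
end
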